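/- arXiv:2311.03087 — 8 statements merged into one kernel-verified Lean document; each statement's English description precedes it below -/
import Mathlib

section
/- Assume additionally that 0 < μ_l < 2 for all l ≥ 2 (G connected and non-bipartite). Then for all vertices i, j, the naive effective resistance equals the sum of all squared diffusion distances at half-integer times: d̃^eff_ij = (1/vol(G)) · Σ_{t=0}^∞ d^diff_ij(t/2)², where the series converges. -/
open Finset

/-- For a connected, non-bipartite weighted graph (`0 < μ_l < 2` for `l ≠ 0`),
the naive effective resistance equals the (convergent) sum of all squared diffusion distances at
half-integer times: `d̃^eff_ij = (1/vol G) · Σ_{t=0}^∞ d^diff_ij(t/2)²`. -/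
theorem naive_effective_resistance_eq_tsum_diffusion
    (n : ℕ) (hn : 2 ≤ n) [NeZero n]
    (A : Matrix (Fin n) (Fin n) ℝ) (hAsymm : A.IsSymm) (hAnonneg : ∀ i j, 0 ≤ A i j)
    (deg : Fin n → ℝ) (hdeg : ∀ i, deg i = ∑ j, A i j) (hdegpos : ∀ i, 0 < deg i)
    (vol : ℝ) (hvol : vol = ∑ i, deg i)
    (Lsym : Matrix (Fin n) (Fin n) ℝ)
    (hL : Lsym = 1 - (Matrix.diagonal fun i => (Real.sqrt (deg i))⁻¹) * A *
      (Matrix.diagonal fun i => (Real.sqrt (deg i))⁻¹))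
    (u : Fin n → Fin n → ℝ) (μ : Fin n → ℝ)
    (hortho : ∀ l m, ∑ i, u l i * u m i = if l = m then (1 : ℝ) else 0)
    (heig : ∀ l, Lsym.mulVec (u l) = μ l • u l)
    (hmono : Monotone μ) (hμ0 : μ 0 = 0)
    (hu0 : ∀ i, u 0 i = Real.sqrt (deg i) / Real.sqrt vol)
    (hμpos : ∀ l, l ≠ 0 → 0 < μ l) (hμlt2 : ∀ l, l ≠ 0 → μ l < 2)
    (i j : Fin n)
    -- squared diffusion distance at time `t/2`
    (ddiffsq : ℕ → ℝ)
    (hddiffsq : ∀ t, ddiffsq t = vol * ∑ l ∈ Finset.univ.filter (fun l : Fin n => l ≠ 0),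
      (1 - μ l) ^ t * (u l i / Real.sqrt (deg i) - u l j / Real.sqrt (deg j)) ^ 2)
    -- naive effective resistance
    (dnaive : ℝ)
    (hdnaive : dnaive = ∑ l ∈ Finset.univ.filter (fun l : Fin n => l ≠ 0),
      (1 / μ l) * (u l i / Real.sqrt (deg i) - u l j / Real.sqrt (deg j)) ^ 2) :
    HasSum (fun t : ℕ => (1 / vol) * ddiffsq t) dnaive := by
  have hvolpos : 0 < vol := by
    rw [hvol]
    exact Finset.sum_pos (fun i _ => hdegpos i) Finset.univ_nonempty
  have key : ∀ l ∈ Finset.univ.filter (fun l : Fin n => l ≠ 0),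
      HasSum (fun t : ℕ => (1 - μ l) ^ t *
        (u l i / Real.sqrt (deg i) - u l j / Real.sqrt (deg j)) ^ 2)
        ((1 / μ l) * (u l i / Real.sqrt (deg i) - u l j / Real.sqrt (deg j)) ^ 2) := by
    intro l hl
    simp only [Finset.mem_filter] at hl
    have h1 := hμpos l hl.2
    have h2 := hμlt2 l hl.2
    have habs : ‖(1 - μ l : ℝ)‖ < 1 := by
      rw [Real.norm_eq_abs, abs_lt]; constructor <;> linarith
    have := (hasSum_geometric_of_norm_lt_one habs).mul_right
      ((u l i / Real.sqrt (deg i) - u l j / Real.sqrt (deg j)) ^ 2)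
    rw [show (1:ℝ) - (1 - μ l) = μ l by ring, ← one_div] at this
    exact this
  have hsum := hasSum_sum key
  rw [hdnaive]
  convert hsum using 2 with t
  rw [hddiffsq t, ← mul_assoc, one_div, inv_mul_cancel₀ hvolpos.ne', one_mul]
end

section
/- Assume additionally that 0 < μ_l < 2 for all l ≥ 2 (G connected and non-bipartite). Define the (symd version of) diffusion pseudotime between vertices i and j by d^dpt_ij = ‖e^dpt_i − e^dpt_j‖, where e^dpt_i ∈ ℝ^{n−1} has coordinates e^dpt_i(l) = ((1−μ_l)/μ_l) · u_{l,i}/√d_i for l = 2, …, n. Then for all vertices i, j: (d^dpt_ij)² = (1/vol(G)) · Σ_{t=1}^∞ (t−1) · d^diff_ij(t/2)², where the series converges. -/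
open Finset

/-- For a connected, non-bipartite weighted graph (`0 < μ_l < 2` for `l ≠ 0`),
the squared ("symd" version of) diffusion pseudotime
`d^dpt_ij = ‖e^dpt_i − e^dpt_j‖`, with `e^dpt_i(l) = ((1−μ_l)/μ_l) · u_{l,i}/√(d_i)`, equals
the (convergent) series `(1/vol G) · Σ_{t=1}^∞ (t−1) · d^diff_ij(t/2)²`. -/
theorem diffusion_pseudotime_eq_tsum_diffusion
    (n : ℕ) (hn : 2 ≤ n) [NeZero n]
    (A : Matrix (Fin n) (Fin n) ℝ) (hAsymm : A.IsSymm) (hAnonneg : ∀ i j, 0 ≤ A i j)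
    (deg : Fin n → ℝ) (hdeg : ∀ i, deg i = ∑ j, A i j) (hdegpos : ∀ i, 0 < deg i)
    (vol : ℝ) (hvol : vol = ∑ i, deg i)
    (Lsym : Matrix (Fin n) (Fin n) ℝ)
    (hL : Lsym = 1 - (Matrix.diagonal fun i => (Real.sqrt (deg i))⁻¹) * A *
      (Matrix.diagonal fun i => (Real.sqrt (deg i))⁻¹))
    (u : Fin n → Fin n → ℝ) (μ : Fin n → ℝ)
    (hortho : ∀ l m, ∑ i, u l i * u m i = if l = m then (1 : ℝ) else 0)
    (heig : ∀ l, Lsym.mulVec (u l) = μ l • u l)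
    (hmono : Monotone μ) (hμ0 : μ 0 = 0)
    (hu0 : ∀ i, u 0 i = Real.sqrt (deg i) / Real.sqrt vol)
    (hμpos : ∀ l, l ≠ 0 → 0 < μ l) (hμlt2 : ∀ l, l ≠ 0 → μ l < 2)
    (i j : Fin n)
    -- squared diffusion distance at time `t/2`
    (ddiffsq : ℕ → ℝ)
    (hddiffsq : ∀ t, ddiffsq t = vol * ∑ l ∈ Finset.univ.filter (fun l : Fin n => l ≠ 0),
      (1 - μ l) ^ t * (u l i / Real.sqrt (deg i) - u l j / Real.sqrt (deg j)) ^ 2)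
    -- diffusion pseudotime embedding ("symd" version)
    (edpt : Fin n → EuclideanSpace ℝ {l : Fin n // l ≠ 0})
    (hedpt : ∀ i' (l : {l : Fin n // l ≠ 0}),
      edpt i' l = ((1 - μ l.1) / μ l.1) * (u l.1 i' / Real.sqrt (deg i')))
    (dpt : ℝ) (hdpt : dpt = ‖edpt i - edpt j‖) :
    HasSum (fun t : ℕ => (1 / vol) * (((t : ℝ) + 1) - 1) * ddiffsq (t + 1)) (dpt ^ 2) := by
  have hvolpos : 0 < vol := by
    rw [hvol]; exact Finset.sum_pos (fun k _ => hdegpos k) Finset.univ_nonempty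
  have hv : vol ≠ 0 := ne_of_gt hvolpos
  set c : Fin n → ℝ := fun l => u l i / Real.sqrt (deg i) - u l j / Real.sqrt (deg j) with hc
  have hE : ∀ f : Fin n → ℝ,
      ∑ l ∈ Finset.univ.filter (fun l : Fin n => l ≠ 0), f l
        = ∑ l : {l : Fin n // l ≠ 0}, f l.1 := fun f =>
    Finset.sum_subtype _ (by simp) f
  have key : dpt ^ 2 = ∑ l ∈ Finset.univ.filter (fun l : Fin n => l ≠ 0),
      ((1 - μ l) / μ l) ^ 2 * c l ^ 2 := by
    rw [hdpt, EuclideanSpace.norm_eq,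
      Real.sq_sqrt (Finset.sum_nonneg fun _ _ => by positivity), hE]
    refine Finset.sum_congr rfl fun l _ => ?_
    have hsub : (edpt i - edpt j) l = edpt i l - edpt j l := rfl
    rw [hsub, hedpt, hedpt, Real.norm_eq_abs, sq_abs]
    simp only [hc]
    ring
  have hmain : HasSum
      (fun t : ℕ => ∑ l ∈ Finset.univ.filter (fun l : Fin n => l ≠ 0),
        (t : ℝ) * ((1 - μ l) ^ (t + 1) * c l ^ 2))
      (∑ l ∈ Finset.univ.filter (fun l : Fin n => l ≠ 0),
        ((1 - μ l) / μ l) ^ 2 * c l ^ 2) := by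
    refine hasSum_sum fun l hl => ?_
    have hl0 : l ≠ 0 := by simpa using hl
    have hμ : 0 < μ l := hμpos l hl0
    have hx : ‖(1 - μ l)‖ < 1 := by
      rw [Real.norm_eq_abs, abs_lt]
      constructor
      · linarith [hμlt2 l hl0]
      · linarith
    have h2 := ((hasSum_coe_mul_geometric_of_norm_lt_one hx).mul_left
      (1 - μ l)).mul_right (c l ^ 2)
    have hμne : μ l ≠ 0 := ne_of_gt hμ
    have h1 : (1 : ℝ) - (1 - μ l) = μ l := by ring
    rw [h1] at h2
    have hf : (fun t : ℕ => (t : ℝ) * ((1 - μ l) ^ (t + 1) * c l ^ 2))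
        = fun t : ℕ => (1 - μ l) * ((t : ℝ) * (1 - μ l) ^ t) * c l ^ 2 := by
      funext t
      ring
    have hv2 : ((1 - μ l) / μ l) ^ 2 * c l ^ 2
        = (1 - μ l) * ((1 - μ l) / μ l ^ 2) * c l ^ 2 := by ring
    rw [hf, hv2]
    exact h2
  have hfun : (fun t : ℕ => (1 / vol) * (((t : ℝ) + 1) - 1) * ddiffsq (t + 1))
      = fun t : ℕ => ∑ l ∈ Finset.univ.filter (fun l : Fin n => l ≠ 0),
        (t : ℝ) * ((1 - μ l) ^ (t + 1) * c l ^ 2) := by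
    funext t
    rw [hddiffsq (t + 1)]
    simp only [Finset.mul_sum]
    refine Finset.sum_congr rfl fun l _ => ?_
    simp only [hc]
    field_simp
    ring
  rw [key, hfun]
  exact hmain
end

section
/- Let x_1, …, x_n be n pairwise distinct points in ℝ^{d'} and let, for each d ≥ d', ι_d : ℝ^{d'} → ℝ^d be an isometric embedding. For each d, let ε_{1,d}, …, ε_{n,d} be jointly independent random vectors each distributed as N(0, σ²I_d) with σ > 0, and set Δ_{i,j,d} = ‖ι_d(x_i) + ε_{i,d} − (ι_d(x_j) + ε_{j,d})‖. Then for each pair i ≠ j, the sequence Δ_{i,j,d}/√d converges to √2·σ in probability as d → ∞. -/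
open MeasureTheory ProbabilityTheory Filter

section aux
open Real NNReal ENNReal Topology


lemma rpow_nat_helper (m : ℕ) (x : ℝ) : x ^ (m : ℝ) = x ^ m := by
  rw [Real.rpow_natCast]

lemma integrable_sq_mul_exp_neg_mul_sq {b : ℝ} (hb : 0 < b) :
    Integrable (fun x : ℝ => x ^ 2 * Real.exp (-b * x ^ 2)) := by
  have h := integrable_rpow_mul_exp_neg_mul_sq hb (s := (2:ℝ)) (by norm_num)
  have e : ∀ x : ℝ, x ^ (2:ℝ) = x ^ (2:ℕ) := by
    intro x; rw [show (2:ℝ) = ((2:ℕ):ℝ) by norm_num, Real.rpow_natCast]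
  simpa only [e] using h

lemma integrable_pow4_mul_exp_neg_mul_sq {b : ℝ} (hb : 0 < b) :
    Integrable (fun x : ℝ => x ^ 4 * Real.exp (-b * x ^ 2)) := by
  have h := integrable_rpow_mul_exp_neg_mul_sq hb (s := (4:ℝ)) (by norm_num)
  have e : ∀ x : ℝ, x ^ (4:ℝ) = x ^ (4:ℕ) := by
    intro x; rw [show (4:ℝ) = ((4:ℕ):ℝ) by norm_num, Real.rpow_natCast]
  simpa only [e] using h

lemma integral_x_mul_exp_neg_mul_sq {b : ℝ} (hb : 0 < b) :
    ∫ x : ℝ, x * Real.exp (-b * x ^ 2) = 0 := by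
  have hderiv : ∀ x : ℝ, HasDerivAt (fun y : ℝ => -(2*b)⁻¹ * Real.exp (-b*y^2))
      (x * Real.exp (-b * x ^ 2)) x := by
    intro x
    have h1 : HasDerivAt (fun y : ℝ => -b * y ^ 2) (-b * (2 * x ^ 1)) x :=
      (hasDerivAt_pow 2 x).const_mul (-b)
    have h2 := (h1.exp).const_mul (-(2*b)⁻¹)
    refine h2.congr_deriv ?_
    field_simp
  exact integral_eq_zero_of_hasDerivAt_of_integrable hderiv
    (integrable_mul_exp_neg_mul_sq hb)
    ((integrable_exp_neg_mul_sq hb).const_mul _)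

lemma integral_sq_mul_exp_neg_mul_sq {b : ℝ} (hb : 0 < b) :
    ∫ x : ℝ, x ^ 2 * Real.exp (-b * x ^ 2) = (2*b)⁻¹ * Real.sqrt (π / b) := by
  have hderiv : ∀ x : ℝ, HasDerivAt (fun y : ℝ => -(2*b)⁻¹ * (y * Real.exp (-b*y^2)))
      (x ^ 2 * Real.exp (-b * x ^ 2) - (2*b)⁻¹ * Real.exp (-b * x ^ 2)) x := by
    intro x
    have h1 : HasDerivAt (fun y : ℝ => -b * y ^ 2) (-b * (2 * x ^ 1)) x :=
      (hasDerivAt_pow 2 x).const_mul (-b)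
    have h2 : HasDerivAt (fun y : ℝ => y * Real.exp (-b*y^2))
        (1 * Real.exp (-b*x^2) + x * (Real.exp (-b*x^2) * (-b * (2 * x ^ 1)))) x :=
      (hasDerivAt_id x).mul h1.exp
    have h3 := h2.const_mul (-(2*b)⁻¹)
    refine h3.congr_deriv ?_
    field_simp
    ring
  have h0 := integral_eq_zero_of_hasDerivAt_of_integrable hderiv
    ((integrable_sq_mul_exp_neg_mul_sq hb).sub
      ((integrable_exp_neg_mul_sq hb).const_mul _))
    ((integrable_mul_exp_neg_mul_sq hb).const_mul _)
  have h1 := integral_sub (integrable_sq_mul_exp_neg_mul_sq hb)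
      ((integrable_exp_neg_mul_sq hb).const_mul ((2*b)⁻¹))
  rw [h1] at h0
  have h2 : ∫ x : ℝ, (2*b)⁻¹ * Real.exp (-b * x ^ 2) = (2*b)⁻¹ * Real.sqrt (π / b) := by
    rw [integral_const_mul, integral_gaussian]
  linarith [h0, h2]


section moments
variable {V : ℝ≥0}

lemma gaussianPDFReal_zero_eq (x : ℝ) :
    gaussianPDFReal 0 V x = (Real.sqrt (2 * π * V))⁻¹ * Real.exp (-(2*(V:ℝ))⁻¹ * x ^ 2) := by
  unfold gaussianPDFReal
  rw [sub_zero, show -x^2/(2*(V:ℝ)) = -(2*(V:ℝ))⁻¹ * x^2 by ring]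

lemma integral_gaussianReal_eq (hV : 0 < (V:ℝ)) (g : ℝ → ℝ) :
    ∫ x, g x ∂(gaussianReal 0 V) = ∫ x, gaussianPDFReal 0 V x * g x := by
  have hVne : V ≠ 0 := by
    intro h; rw [h] at hV; simp at hV
  rw [gaussianReal_of_var_ne_zero 0 hVne]
  have hd : gaussianPDF 0 V = fun x => ((gaussianPDFReal 0 V x).toNNReal : ℝ≥0∞) := by
    funext x; rfl
  rw [hd, integral_withDensity_eq_integral_smul
    (measurable_gaussianPDFReal 0 V).real_toNNReal g]
  congr 1
  funext x
  rw [NNReal.smul_def, Real.coe_toNNReal _ (gaussianPDFReal_nonneg 0 V x)]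
  rfl

lemma integrable_gaussianReal_iff (hV : 0 < (V:ℝ)) {g : ℝ → ℝ} (hg : Measurable g) :
    Integrable g (gaussianReal 0 V) ↔
      Integrable (fun x => g x * gaussianPDFReal 0 V x) := by
  have hVne : V ≠ 0 := by
    intro h; rw [h] at hV; simp at hV
  rw [gaussianReal_of_var_ne_zero 0 hVne,
    integrable_withDensity_iff (measurable_gaussianPDF 0 V)
      (Filter.Eventually.of_forall fun x => ENNReal.ofReal_lt_top)]
  constructor <;> intro h <;> refine h.congr (Filter.Eventually.of_forall fun x => ?_) <;>
    simp [gaussianPDF, ENNReal.toReal_ofReal (gaussianPDFReal_nonneg 0 V x)]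
end moments

section g3
variable {V : ℝ≥0}

variable (hV : 0 < (V:ℝ))

lemma hb_pos (hV : 0 < (V:ℝ)) : 0 < (2*(V:ℝ))⁻¹ := by positivity

lemma glue (g : ℝ → ℝ) :
    (fun x => g x * gaussianPDFReal 0 V x)
      = fun x => (Real.sqrt (2 * π * V))⁻¹ * (g x * Real.exp (-(2*(V:ℝ))⁻¹ * x ^ 2)) := by
  funext x; rw [gaussianPDFReal_zero_eq]; ring

lemma integrable_id_gaussian (hV : 0 < (V:ℝ)) :
    Integrable (fun x : ℝ => x) (gaussianReal 0 V) := by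
  rw [integrable_gaussianReal_iff hV (measurable_id' (α := ℝ)), glue]
  exact (integrable_mul_exp_neg_mul_sq (hb_pos hV)).const_mul _

lemma integrable_sq_gaussian (hV : 0 < (V:ℝ)) :
    Integrable (fun x : ℝ => x ^ 2) (gaussianReal 0 V) := by
  rw [integrable_gaussianReal_iff hV (by fun_prop), glue]
  exact (integrable_sq_mul_exp_neg_mul_sq (hb_pos hV)).const_mul _

lemma integrable_pow4_gaussian (hV : 0 < (V:ℝ)) :
    Integrable (fun x : ℝ => x ^ 4) (gaussianReal 0 V) := by
  rw [integrable_gaussianReal_iff hV (by fun_prop), glue]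
  exact (integrable_pow4_mul_exp_neg_mul_sq (hb_pos hV)).const_mul _

lemma integral_id_gaussian (hV : 0 < (V:ℝ)) :
    ∫ x, x ∂(gaussianReal 0 V) = 0 := by
  rw [integral_gaussianReal_eq hV]
  have : (fun x : ℝ => gaussianPDFReal 0 V x * x)
      = fun x => (Real.sqrt (2 * π * V))⁻¹ * (x * Real.exp (-(2*(V:ℝ))⁻¹ * x ^ 2)) := by
    funext x; rw [gaussianPDFReal_zero_eq]; ring
  rw [this, integral_const_mul, integral_x_mul_exp_neg_mul_sq (hb_pos hV), mul_zero]

lemma integral_sq_gaussian (hV : 0 < (V:ℝ)) :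
    ∫ x, x ^ 2 ∂(gaussianReal 0 V) = V := by
  rw [integral_gaussianReal_eq hV]
  have : (fun x : ℝ => gaussianPDFReal 0 V x * x ^ 2)
      = fun x => (Real.sqrt (2 * π * V))⁻¹ * (x ^ 2 * Real.exp (-(2*(V:ℝ))⁻¹ * x ^ 2)) := by
    funext x; rw [gaussianPDFReal_zero_eq]; ring
  rw [this, integral_const_mul, integral_sq_mul_exp_neg_mul_sq (hb_pos hV)]
  have hVne : (V:ℝ) ≠ 0 := ne_of_gt hV
  have h1 : π / (2*(V:ℝ))⁻¹ = 2 * π * V := by field_simp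
  have h2 : (2*(2*(V:ℝ))⁻¹)⁻¹ = (V:ℝ) := by field_simp
  rw [h1, h2]
  have hs : 0 < Real.sqrt (2 * π * V) := sqrt_pos.2 (by positivity)
  field_simp
end g3


noncomputable def gaussM4 (V : ℝ≥0) : ℝ := ∫ x, x ^ 4 ∂(gaussianReal 0 V)

lemma gaussM4_nonneg (V : ℝ≥0) : 0 ≤ gaussM4 V :=
  integral_nonneg fun x => by positivity

section rv
variable {Ω : Type*} [MeasureSpace Ω] [IsProbabilityMeasure (ℙ : Measure Ω)]
variable {V : ℝ≥0} {X : Ω → ℝ}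

lemma rv_integrable_pow (hV : 0 < (V:ℝ)) (hXm : Measurable X)
    (hmap : Measure.map X ℙ = gaussianReal 0 V) (m : ℕ)
    (hint : Integrable (fun x : ℝ => x ^ m) (gaussianReal 0 V)) :
    Integrable (fun ω => X ω ^ m) ℙ := by
  have h : Integrable (fun x : ℝ => x ^ m) (Measure.map X ℙ) := by rw [hmap]; exact hint
  have := (integrable_map_measure (by fun_prop) hXm.aemeasurable).1 h
  exact this

lemma rv_integral_pow (hXm : Measurable X)
    (hmap : Measure.map X ℙ = gaussianReal 0 V) (m : ℕ) :
    ∫ ω, X ω ^ m ∂ℙ = ∫ x, x ^ m ∂(gaussianReal 0 V) := by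
  rw [← hmap, integral_map hXm.aemeasurable (by fun_prop)]

lemma rv_integrable (hV : 0 < (V:ℝ)) (hXm : Measurable X)
    (hmap : Measure.map X ℙ = gaussianReal 0 V) :
    Integrable X ℙ := by
  have := rv_integrable_pow hV hXm hmap 1 (by simpa using integrable_id_gaussian hV)
  simpa using this

lemma rv_integral_zero (hV : 0 < (V:ℝ)) (hXm : Measurable X)
    (hmap : Measure.map X ℙ = gaussianReal 0 V) :
    ∫ ω, X ω ∂ℙ = 0 := by
  have := rv_integral_pow hXm hmap 1
  simpa [integral_id_gaussian hV] using this
end rv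

lemma quart_nonneg {a b c : ℝ} (ha : 0 ≤ a) (hb : 0 ≤ b) (hc : 0 ≤ c) :
    (a+b+c)^4 ≤ 27*(a^4+b^4+c^4) := by
  have h1 : (a+b+c)^2 ≤ 3*(a^2+b^2+c^2) := by
    nlinarith [sq_nonneg (a-b), sq_nonneg (b-c), sq_nonneg (a-c)]
  have h2 : (a^2+b^2+c^2)^2 ≤ 3*(a^4+b^4+c^4) := by
    nlinarith [sq_nonneg (a^2-b^2), sq_nonneg (b^2-c^2), sq_nonneg (a^2-c^2)]
  calc (a+b+c)^4 = ((a+b+c)^2)^2 := by ring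
    _ ≤ (3*(a^2+b^2+c^2))^2 := by
        apply pow_le_pow_left₀ (sq_nonneg _) h1
    _ = 9*(a^2+b^2+c^2)^2 := by ring
    _ ≤ 27*(a^4+b^4+c^4) := by nlinarith [h2]

lemma quart_abs (u v w : ℝ) : (u+v+w)^4 ≤ 27*(u^4+v^4+w^4) := by
  have h := quart_nonneg (abs_nonneg u) (abs_nonneg v) (abs_nonneg w)
  have h2 : (u+v+w)^4 ≤ (|u|+|v|+|w|)^4 := by
    calc (u+v+w)^4 = |u+v+w|^4 := by rw [← abs_pow, abs_of_nonneg (by positivity)]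
      _ ≤ (|u|+|v|+|w|)^4 := by
          apply pow_le_pow_left₀ (abs_nonneg _)
          exact (abs_add_three u v w)
  calc (u+v+w)^4 ≤ (|u|+|v|+|w|)^4 := h2
    _ ≤ 27*(|u|^4+|v|^4+|w|^4) := h
    _ = 27*(u^4+v^4+w^4) := by
        rw [← abs_pow, ← abs_pow, ← abs_pow, abs_of_nonneg (by positivity : (0:ℝ) ≤ u^4),
          abs_of_nonneg (by positivity : (0:ℝ) ≤ v^4), abs_of_nonneg (by positivity : (0:ℝ) ≤ w^4)]


section keyk
variable {Ω : Type*} [MeasureSpace Ω] [IsProbabilityMeasure (ℙ : Measure Ω)]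
variable {V : ℝ≥0} {A B : Ω → ℝ} {c : ℝ}

lemma keyk (hV : 0 < (V:ℝ)) (hAm : Measurable A) (hBm : Measurable B)
    (hmapA : Measure.map A ℙ = gaussianReal 0 V)
    (hmapB : Measure.map B ℙ = gaussianReal 0 V)
    (hAB : IndepFun A B ℙ) (c : ℝ) :
    Integrable (fun ω => (c + A ω - B ω)^2) ℙ ∧
    (∫ ω, (c + A ω - B ω)^2 ∂ℙ) = c^2 + 2*(V:ℝ) ∧
    MemLp (fun ω => (c + A ω - B ω)^2) 2 ℙ ∧
    variance (fun ω => (c + A ω - B ω)^2) ℙ ≤ 27*c^4 + 54 * gaussM4 V := by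
  have iA : Integrable A ℙ := rv_integrable hV hAm hmapA
  have iB : Integrable B ℙ := rv_integrable hV hBm hmapB
  have iA2 : Integrable (fun ω => A ω ^ 2) ℙ :=
    rv_integrable_pow hV hAm hmapA 2 (integrable_sq_gaussian hV)
  have iB2 : Integrable (fun ω => B ω ^ 2) ℙ :=
    rv_integrable_pow hV hBm hmapB 2 (integrable_sq_gaussian hV)
  have iA4 : Integrable (fun ω => A ω ^ 4) ℙ :=
    rv_integrable_pow hV hAm hmapA 4 (integrable_pow4_gaussian hV)
  have iB4 : Integrable (fun ω => B ω ^ 4) ℙ :=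
    rv_integrable_pow hV hBm hmapB 4 (integrable_pow4_gaussian hV)
  have iAB : Integrable (fun ω => A ω * B ω) ℙ := hAB.integrable_mul iA iB
  have hEA : ∫ ω, A ω ∂ℙ = 0 := rv_integral_zero hV hAm hmapA
  have hEB : ∫ ω, B ω ∂ℙ = 0 := rv_integral_zero hV hBm hmapB
  have hEA2 : ∫ ω, A ω ^ 2 ∂ℙ = (V:ℝ) := by
    rw [rv_integral_pow hAm hmapA 2, integral_sq_gaussian hV]
  have hEB2 : ∫ ω, B ω ^ 2 ∂ℙ = (V:ℝ) := by
    rw [rv_integral_pow hBm hmapB 2, integral_sq_gaussian hV]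
  have hEA4 : ∫ ω, A ω ^ 4 ∂ℙ = gaussM4 V := rv_integral_pow hAm hmapA 4
  have hEB4 : ∫ ω, B ω ^ 4 ∂ℙ = gaussM4 V := rv_integral_pow hBm hmapB 4
  have hEAB : ∫ ω, A ω * B ω ∂ℙ = 0 := by
    have h : ∫ ω, A ω * B ω ∂ℙ = (∫ ω, A ω ∂ℙ) * ∫ ω, B ω ∂ℙ :=
      hAB.integral_mul_eq_mul_integral iA.aestronglyMeasurable iB.aestronglyMeasurable
    rw [h, hEA, hEB]; ring
  have hWeq : (fun ω => (c + A ω - B ω)^2)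
      = fun ω => c^2 + 2*c*A ω + A ω^2 + (-(2*c))*B ω + B ω^2 + (-2)*(A ω*B ω) :=
    funext fun ω => by ring
  have iW : Integrable (fun ω => (c + A ω - B ω)^2) ℙ := by
    rw [hWeq]
    exact (((((integrable_const _).add (iA.const_mul _)).add iA2).add
      (iB.const_mul _)).add iB2).add (iAB.const_mul _)
  have I2 : Integrable (fun ω => c^2 + 2*c*A ω) ℙ := by
    exact (integrable_const _).add (iA.const_mul _)
  have I3 : Integrable (fun ω => c^2 + 2*c*A ω + A ω^2) ℙ := by exact I2.add iA2
  have I4 : Integrable (fun ω => c^2 + 2*c*A ω + A ω^2 + (-(2*c))*B ω) ℙ := by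
    exact I3.add (iB.const_mul _)
  have I5 : Integrable (fun ω => c^2 + 2*c*A ω + A ω^2 + (-(2*c))*B ω + B ω^2) ℙ := by
    exact I4.add iB2
  have I6 : Integrable (fun ω => (-2:ℝ)*(A ω*B ω)) ℙ := by exact iAB.const_mul _
  have I1 : Integrable (fun ω => 2*c*A ω) ℙ := by exact iA.const_mul _
  have I4' : Integrable (fun ω => (-(2*c))*B ω) ℙ := by exact iB.const_mul _
  have hEW : (∫ ω, (c + A ω - B ω)^2 ∂ℙ) = c^2 + 2*(V:ℝ) := by
    rw [hWeq]
    rw [integral_add I5 I6, integral_add I4 iB2, integral_add I3 I4',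
      integral_add I2 iA2, integral_add (integrable_const _) I1,
      integral_const_mul, integral_const_mul, integral_const_mul,
      hEA, hEB, hEA2, hEB2, hEAB, integral_const]
    simp
    ring
  have hWm : Measurable (fun ω => (c + A ω - B ω)^2) := by fun_prop
  have hbound : ∀ ω, ((c + A ω - B ω)^2)^2 ≤ 27*(c^4 + A ω^4 + B ω^4) := by
    intro ω
    have h := quart_abs c (A ω) (-B ω)
    have e : (c + A ω + -B ω) = c + A ω - B ω := by ring
    rw [e] at h
    calc ((c + A ω - B ω)^2)^2 = (c + A ω - B ω)^4 := by ring
      _ ≤ 27*(c^4 + A ω^4 + (-B ω)^4) := h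
      _ = 27*(c^4 + A ω^4 + B ω^4) := by ring
  have iRHS : Integrable (fun ω => 27*(c^4 + A ω^4 + B ω^4)) ℙ :=
    (((integrable_const _).add iA4).add iB4).const_mul _
  have iW2 : Integrable (fun ω => ((c + A ω - B ω)^2)^2) ℙ := by
    apply Integrable.mono' iRHS (hWm.pow_const 2).aestronglyMeasurable
    filter_upwards with ω
    rw [Real.norm_eq_abs, abs_of_nonneg (by positivity)]
    exact hbound ω
  have hmem : MemLp (fun ω => (c + A ω - B ω)^2) 2 ℙ :=
    (memLp_two_iff_integrable_sq hWm.aestronglyMeasurable).2 iW2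
  refine ⟨iW, hEW, hmem, ?_⟩
  have hvar := variance_le_expectation_sq (μ := (ℙ : Measure Ω))
    (X := fun ω => (c + A ω - B ω)^2) hWm.aestronglyMeasurable
  have hpow : ((fun ω => (c + A ω - B ω)^2)^2 : Ω → ℝ) = fun ω => ((c + A ω - B ω)^2)^2 := rfl
  rw [hpow] at hvar
  have hEW2 : (∫ ω, ((c + A ω - B ω)^2)^2 ∂ℙ) ≤ 27*c^4 + 54 * gaussM4 V := by
    have J1 : Integrable (fun ω => c^4 + A ω^4) ℙ := by exact (integrable_const _).add iA4
    have := integral_mono iW2 iRHS hbound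
    rw [integral_const_mul, integral_add J1 iB4,
      integral_add (integrable_const _) iA4, integral_const, hEA4, hEB4] at this
    simp at this
    linarith [this]
  exact le_trans hvar hEW2
end keyk



section keyd
variable {Ω : Type*} [MeasureSpace Ω] [IsProbabilityMeasure (ℙ : Measure Ω)] {V : ℝ≥0}

lemma keyd (hV : 0 < (V:ℝ)) (d : ℕ) (v : Fin d → ℝ) (A B : Fin d → Ω → ℝ)
    (hAm : ∀ k, Measurable (A k)) (hBm : ∀ k, Measurable (B k))
    (hmapA : ∀ k, Measure.map (A k) ℙ = gaussianReal 0 V)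
    (hmapB : ∀ k, Measure.map (B k) ℙ = gaussianReal 0 V)
    (hABk : ∀ k, IndepFun (A k) (B k) ℙ)
    (hWindep : ∀ k l : Fin d, k ≠ l →
      IndepFun (fun ω => (v k + A k ω - B k ω)^2) (fun ω => (v l + A l ω - B l ω)^2) ℙ)
    (t : ℝ) (ht : 0 < t) :
    ℙ {ω | t ≤ |(∑ k : Fin d, (v k + A k ω - B k ω)^2) - ∑ k : Fin d, (v k^2 + 2*(V:ℝ))|}
      ≤ ENNReal.ofReal ((∑ k : Fin d, (27*(v k)^4 + 54*gaussM4 V)) / t^2) := by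
  set W : Fin d → Ω → ℝ := fun k ω => (v k + A k ω - B k ω)^2 with hWdef
  have hkey : ∀ k, Integrable (W k) ℙ ∧ (∫ ω, W k ω ∂ℙ) = (v k)^2 + 2*(V:ℝ) ∧
      MemLp (W k) 2 ℙ ∧ variance (W k) ℙ ≤ 27*(v k)^4 + 54 * gaussM4 V :=
    fun k => keyk hV (hAm k) (hBm k) (hmapA k) (hmapB k) (hABk k) (v k)
  have hmem : ∀ k, MemLp (W k) 2 ℙ := fun k => (hkey k).2.2.1
  have hSsum : (∑ k : Fin d, W k) = fun ω => ∑ k : Fin d, W k ω := by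
    funext ω; simp
  have hSmem : MemLp (fun ω => ∑ k : Fin d, W k ω) 2 ℙ := by
    rw [← hSsum]; exact memLp_finset_sum' Finset.univ (fun k _ => hmem k)
  have hES : ∫ ω, (∑ k : Fin d, W k ω) ∂ℙ = ∑ k : Fin d, ((v k)^2 + 2*(V:ℝ)) := by
    rw [integral_finset_sum Finset.univ (fun k _ => (hkey k).1)]
    exact Finset.sum_congr rfl fun k _ => (hkey k).2.1
  have hVarS : variance (fun ω => ∑ k : Fin d, W k ω) ℙ
      ≤ ∑ k : Fin d, (27*(v k)^4 + 54*gaussM4 V) := by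
    rw [← hSsum, IndepFun.variance_sum (fun k _ => hmem k)
      (fun k _ l _ hkl => hWindep k l hkl)]
    exact Finset.sum_le_sum fun k _ => (hkey k).2.2.2
  have hcheb := meas_ge_le_variance_div_sq hSmem ht
  rw [show (ℙ[fun ω => ∑ k : Fin d, W k ω]) = ∑ k : Fin d, ((v k)^2 + 2*(V:ℝ)) from hES]
    at hcheb
  refine le_trans hcheb (ENNReal.ofReal_le_ofReal ?_)
  gcongr

end keyd

end aux

section main
open Real NNReal ENNReal Topology

/-- Let `x₁, …, x_n ∈ ℝ^{d'}` be pairwise distinct, `ι_d` isometric embeddings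
for `d ≥ d'`, and `ε_{1,d}, …, ε_{n,d}` jointly independent `N(0, σ²I_d)` random vectors. With
`Δ_{i,j,d} = ‖ι_d(x_i) + ε_{i,d} − (ι_d(x_j) + ε_{j,d})‖`, for each `i ≠ j` the sequence
`Δ_{i,j,d}/√d` converges to `√2·σ` in probability. -/
theorem noisy_distance_convergence_in_probability
    (Ω : Type*) [MeasureSpace Ω] [IsProbabilityMeasure (ℙ : Measure Ω)]
    (n d' : ℕ) (x : Fin n → EuclideanSpace ℝ (Fin d'))
    (hx : Function.Injective x)
    (σ : ℝ) (hσ : 0 < σ)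
    (ι : (d : ℕ) → EuclideanSpace ℝ (Fin d') → EuclideanSpace ℝ (Fin d))
    (hι : ∀ d, d' ≤ d → Isometry (ι d))
    (ε : (d : ℕ) → Fin n → Ω → EuclideanSpace ℝ (Fin d))
    (hmeas : ∀ d i (k : Fin d), Measurable (fun ω => ε d i ω k))
    (hdist : ∀ d i (k : Fin d),
      Measure.map (fun ω => ε d i ω k) ℙ = gaussianReal 0 ⟨σ ^ 2, sq_nonneg σ⟩)
    (hindep : ∀ d : ℕ, iIndepFun
      (fun (p : Fin n × Fin d) ω => ε d p.1 ω p.2) ℙ)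
    (i j : Fin n) (hij : i ≠ j) :
    ∀ c : ℝ, 0 < c →
      Tendsto
        (fun d : ℕ => ℙ {ω : Ω |
          c < |‖ι d (x i) + ε d i ω - (ι d (x j) + ε d j ω)‖ / Real.sqrt d
                - Real.sqrt 2 * σ|})
        atTop (nhds 0) := by
  intro c hc
  set V : ℝ≥0 := ⟨σ^2, sq_nonneg σ⟩ with hVdef
  have hVr : (V:ℝ) = σ^2 := rfl
  have hV : 0 < (V:ℝ) := by rw [hVr]; positivity
  set s : ℝ := Real.sqrt 2 * σ with hsdef
  have hs : 0 < s := by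
    have h2 : 0 < Real.sqrt 2 := Real.sqrt_pos.2 (by norm_num)
    exact mul_pos h2 hσ
  set c' : ℝ := s * c with hc'def
  have hc' : 0 < c' := mul_pos hs hc
  set L : ℝ := dist (x i) (x j) with hLdef
  have hL0 : 0 ≤ L := dist_nonneg
  set M : ℝ := gaussM4 V with hMdef
  have hM0 : 0 ≤ M := gaussM4_nonneg V
  set g : ℕ → ℝ≥0∞ :=
    fun d => ENNReal.ofReal ((27*L^4 + 54*M*(d:ℝ)) / ((d:ℝ)*c'/2)^2) with hgdef
  -- the bound tends to zero
  have hreal : Tendsto (fun d : ℕ => (27*L^4 + 54*M*(d:ℝ)) / ((d:ℝ)*c'/2)^2)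
      atTop (𝓝 0) := by
    have hd1 : Tendsto (fun d : ℕ => (1:ℝ)/d) atTop (𝓝 0) :=
      tendsto_one_div_atTop_nhds_zero_nat
    have h1 : Tendsto (fun d : ℕ =>
        (108*L^4/c'^2) * ((1:ℝ)/d * (1/d)) + (216*M/c'^2) * ((1:ℝ)/d)) atTop (𝓝 0) := by
      have := ((hd1.mul hd1).const_mul (108*L^4/c'^2)).add (hd1.const_mul (216*M/c'^2))
      simpa using this
    refine Tendsto.congr' ?_ h1
    filter_upwards [eventually_ge_atTop 1] with d hd
    have hdne : (d:ℝ) ≠ 0 := Nat.cast_ne_zero.2 (by omega)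
    field_simp
    ring
  have hg0 : Tendsto g atTop (𝓝 0) := by
    have := ENNReal.tendsto_ofReal hreal
    simpa using this
  -- squeeze
  refine tendsto_of_tendsto_of_tendsto_of_le_of_le' tendsto_const_nhds hg0
    (Eventually.of_forall fun d => zero_le) ?_
  rw [eventually_atTop]
  refine ⟨max (max d' 1) ⌈2*L^2/c'⌉₊, fun d hd => ?_⟩
  have hd' : d' ≤ d := le_trans (le_trans (le_max_left _ _) (le_max_left _ _)) hd
  have hd1 : 1 ≤ d := le_trans (le_trans (le_max_right _ _) (le_max_left _ _)) hd
  have hdceil : (⌈2*L^2/c'⌉₊ : ℕ) ≤ d := le_trans (le_max_right _ _) hd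
  have hdpos : (0:ℝ) < d := by exact_mod_cast Nat.lt_of_lt_of_le Nat.zero_lt_one hd1
  have hdL : L^2 ≤ (d:ℝ)*c'/2 := by
    have h1 : 2*L^2/c' ≤ (d:ℝ) :=
      le_trans (Nat.le_ceil _) (by exact_mod_cast hdceil)
    rw [div_le_iff₀ hc'] at h1
    linarith
  -- coordinates
  set v : Fin d → ℝ := fun k => (ι d (x i) - ι d (x j)) k with hvdef
  set A : Fin d → Ω → ℝ := fun k ω => ε d i ω k with hAdef
  set B : Fin d → Ω → ℝ := fun k ω => ε d j ω k with hBdef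
  have hsum_v : ∑ k : Fin d, v k ^ 2 = L^2 := by
    have h1 : ‖ι d (x i) - ι d (x j)‖ = L := by
      rw [← dist_eq_norm]; exact (hι d hd').dist_eq _ _
    have h2 : ‖ι d (x i) - ι d (x j)‖^2 = ∑ k : Fin d, v k ^ 2 := by
      rw [EuclideanSpace.norm_eq, Real.sq_sqrt (by positivity)]
      exact Finset.sum_congr rfl fun k _ => by
        rw [Real.norm_eq_abs, sq_abs]
    rw [← h2, h1]
  have hsum_v4 : ∑ k : Fin d, (v k)^4 ≤ L^4 := by
    have h1 := Finset.sum_sq_le_sq_sum_of_nonneg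
      (s := Finset.univ) (f := fun k : Fin d => v k ^ 2) (fun k _ => sq_nonneg _)
    calc ∑ k : Fin d, (v k)^4 = ∑ k : Fin d, (v k ^ 2)^2 := by
          exact Finset.sum_congr rfl fun k _ => by ring
      _ ≤ (∑ k : Fin d, v k ^ 2)^2 := h1
      _ = L^4 := by rw [hsum_v]; ring
  have hDelta : ∀ ω, ‖ι d (x i) + ε d i ω - (ι d (x j) + ε d j ω)‖^2
      = ∑ k : Fin d, (v k + A k ω - B k ω)^2 := by
    intro ω
    rw [EuclideanSpace.norm_eq, Real.sq_sqrt (by positivity)]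
    refine Finset.sum_congr rfl fun k _ => ?_
    rw [Real.norm_eq_abs, sq_abs]
    have hco : (ι d (x i) + ε d i ω - (ι d (x j) + ε d j ω)) k
        = v k + A k ω - B k ω := by
      simp [hvdef, hAdef, hBdef]
      ring
    rw [hco]
  have hE : ∑ k : Fin d, (v k^2 + 2*(V:ℝ)) = L^2 + 2*σ^2*(d:ℝ) := by
    rw [Finset.sum_add_distrib, hsum_v, Finset.sum_const, Finset.card_univ,
      Fintype.card_fin, hVr, nsmul_eq_mul]
    ring
  -- event inclusion
  have hsub : {ω : Ω | c < |‖ι d (x i) + ε d i ω - (ι d (x j) + ε d j ω)‖ / Real.sqrt d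
        - Real.sqrt 2 * σ|}
      ⊆ {ω : Ω | (d:ℝ)*c'/2 ≤
          |(∑ k : Fin d, (v k + A k ω - B k ω)^2) - ∑ k : Fin d, (v k^2 + 2*(V:ℝ))|} := by
    intro ω hω
    simp only [Set.mem_setOf_eq] at hω ⊢
    set Δ : ℝ := ‖ι d (x i) + ε d i ω - (ι d (x j) + ε d j ω)‖ with hΔdef
    have hΔ0 : 0 ≤ Δ := norm_nonneg _
    have hsd : 0 < Real.sqrt d := Real.sqrt_pos.2 hdpos
    set a : ℝ := Δ / Real.sqrt d with hadef
    have ha0 : 0 ≤ a := div_nonneg hΔ0 hsd.le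
    have hω' : c < |a - s| := hω
    have h1 : c' < s * |a - s| := by
      rw [hc'def]; exact (mul_lt_mul_iff_right₀ hs).2 hω'
    have h2 : s * |a-s| ≤ (a+s) * |a-s| :=
      mul_le_mul_of_nonneg_right (by linarith) (abs_nonneg _)
    have h3 : (a+s)*|a-s| = |a^2 - s^2| := by
      rw [← abs_of_nonneg (by linarith : (0:ℝ) ≤ a+s), ← abs_mul]
      congr 1; ring
    have ha2 : a^2 = Δ^2/(d:ℝ) := by
      rw [hadef, div_pow, Real.sq_sqrt hdpos.le]
    have hs2 : s^2 = 2*σ^2 := by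
      rw [hsdef, mul_pow, Real.sq_sqrt (by norm_num : (0:ℝ) ≤ 2)]
    have h4 : c' < |Δ^2/(d:ℝ) - 2*σ^2| := by
      rw [← ha2, ← hs2]; linarith
    have h5 : (d:ℝ)*c' < |Δ^2 - 2*σ^2*(d:ℝ)| := by
      have h51 : (d:ℝ) * c' < (d:ℝ) * |Δ^2/(d:ℝ) - 2*σ^2| := (mul_lt_mul_iff_right₀ hdpos).2 h4
      have h52 : (d:ℝ) * |Δ^2/(d:ℝ) - 2*σ^2| = |Δ^2 - 2*σ^2*(d:ℝ)| := by
        calc (d:ℝ) * |Δ^2/(d:ℝ) - 2*σ^2| = |(d:ℝ)| * |Δ^2/(d:ℝ) - 2*σ^2| := by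
              rw [abs_of_nonneg hdpos.le]
          _ = |(d:ℝ) * (Δ^2/(d:ℝ) - 2*σ^2)| := (abs_mul _ _).symm
          _ = |Δ^2 - 2*σ^2*(d:ℝ)| := by
              rw [show (d:ℝ) * (Δ^2/(d:ℝ) - 2*σ^2) = Δ^2 - 2*σ^2*(d:ℝ) by
                field_simp]
      linarith
    have hSΔ : Δ^2 = ∑ k : Fin d, (v k + A k ω - B k ω)^2 := hDelta ω
    have h6 : |Δ^2 - 2*σ^2*(d:ℝ)| - L^2 ≤ |(Δ^2 - 2*σ^2*(d:ℝ)) - L^2| := by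
      have h61 := abs_sub_abs_le_abs_sub (Δ^2 - 2*σ^2*(d:ℝ)) (L^2)
      rw [abs_of_nonneg (by positivity : (0:ℝ) ≤ L^2)] at h61
      exact h61
    rw [hE, ← hSΔ, show Δ^2 - (L^2 + 2*σ^2*(d:ℝ)) = (Δ^2 - 2*σ^2*(d:ℝ)) - L^2 by ring]
    linarith
  -- apply Chebyshev bound
  have hABk : ∀ k : Fin d, IndepFun (A k) (B k) ℙ := by
    intro k
    exact (hindep d).indepFun (i := (i,k)) (j := (j,k)) (by simp [Prod.ext_iff, hij])
  have hWindep : ∀ k l : Fin d, k ≠ l →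
      IndepFun (fun ω => (v k + A k ω - B k ω)^2) (fun ω => (v l + A l ω - B l ω)^2) ℙ := by
    intro k l hkl
    have base := (hindep d).indepFun_prodMk_prodMk (fun p => hmeas d p.1 p.2)
      (i,k) (j,k) (i,l) (j,l)
      (by simp [Prod.ext_iff, hkl]) (by simp [Prod.ext_iff, hij])
      (by simp [Prod.ext_iff, hij.symm]) (by simp [Prod.ext_iff, hkl])
    have hφk : Measurable (fun p : ℝ × ℝ => (v k + p.1 - p.2)^2) := by fun_prop
    have hφl : Measurable (fun p : ℝ × ℝ => (v l + p.1 - p.2)^2) := by fun_prop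
    exact base.comp hφk hφl
  have hcheb := keyd hV d v A B (fun k => hmeas d i k) (fun k => hmeas d j k)
    (fun k => hdist d i k) (fun k => hdist d j k) hABk hWindep
    ((d:ℝ)*c'/2) (by positivity)
  calc ℙ {ω : Ω | c < |‖ι d (x i) + ε d i ω - (ι d (x j) + ε d j ω)‖ / Real.sqrt d
        - Real.sqrt 2 * σ|}
      ≤ ℙ {ω : Ω | (d:ℝ)*c'/2 ≤
          |(∑ k : Fin d, (v k + A k ω - B k ω)^2) - ∑ k : Fin d, (v k^2 + 2*(V:ℝ))|} :=
        measure_mono hsub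
    _ ≤ ENNReal.ofReal ((∑ k : Fin d, (27*(v k)^4 + 54*gaussM4 V)) / ((d:ℝ)*c'/2)^2) := hcheb
    _ ≤ g d := by
        rw [hgdef]
        apply ENNReal.ofReal_le_ofReal
        have hnum : (∑ k : Fin d, (27*(v k)^4 + 54*gaussM4 V)) ≤ 27*L^4 + 54*M*(d:ℝ) := by
          rw [Finset.sum_add_distrib, Finset.sum_const, Finset.card_univ, Fintype.card_fin,
            nsmul_eq_mul, ← Finset.mul_sum, ← hMdef]
          have h27 : (27:ℝ) * ∑ k : Fin d, (v k)^4 ≤ 27 * L^4 := by linarith [hsum_v4]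
          push_cast
          linarith
        gcongr

end main
end

section
/- Let x_1, …, x_n be n pairwise distinct points in ℝ^{d'} and let, for each d ≥ d', ι_d : ℝ^{d'} → ℝ^d be an isometric embedding. For each d, let ε_{1,d}, …, ε_{n,d} be jointly independent random vectors each distributed as N(0, σ²I_d) with σ > 0, and set Δ_{i,j,d} = ‖ι_d(x_i) + ε_{i,d} − (ι_d(x_j) + ε_{j,d})‖. Then for each pair i ≠ j, the ratio ‖ε_{i,d} − ε_{j,d}‖/Δ_{i,j,d} converges to 1 in probability as d → ∞ (the ratio is well defined almost surely). -/
open MeasureTheory ProbabilityTheory Filter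

lemma gaussian_pair_set_pos (σ : ℝ) (hσ : 0 < σ) :
    0 < ((gaussianReal 0 ⟨σ ^ 2, sq_nonneg σ⟩).prod (gaussianReal 0 ⟨σ ^ 2, sq_nonneg σ⟩))
      {q : ℝ × ℝ | 1 ≤ (q.1 - q.2) ^ 2} := by
  set v : NNReal := ⟨σ ^ 2, sq_nonneg σ⟩ with hvdef
  have hv0 : v ≠ 0 := by
    intro h
    have h2 : σ ^ 2 = 0 := congrArg Subtype.val h
    exact (pow_ne_zero 2 hσ.ne') h2
  set ν : Measure ℝ := gaussianReal 0 v with hν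
  have hsub : Set.Ici (1:ℝ) ×ˢ Set.Iic (0:ℝ) ⊆ {q : ℝ × ℝ | 1 ≤ (q.1 - q.2) ^ 2} := by
    rintro ⟨a, b⟩ ⟨ha, hb⟩
    simp only [Set.mem_Ici, Set.mem_Iic] at ha hb
    simp only [Set.mem_setOf_eq]
    nlinarith
  have h1 : ν (Set.Ici (1:ℝ)) ≠ 0 := by
    intro h
    have := gaussianReal_absolutelyContinuous' 0 hv0 h
    simp [Real.volume_Ici] at this
  have h2 : ν (Set.Iic (0:ℝ)) ≠ 0 := by
    intro h
    have := gaussianReal_absolutelyContinuous' 0 hv0 h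
    simp [Real.volume_Iic] at this
  calc (0:ENNReal) < ν (Set.Ici (1:ℝ)) * ν (Set.Iic (0:ℝ)) := ENNReal.mul_pos h1 h2
    _ = (ν.prod ν) (Set.Ici (1:ℝ) ×ˢ Set.Iic (0:ℝ)) := (Measure.prod_prod _ _).symm
    _ ≤ _ := measure_mono hsub

/-- Let `x₁, …, x_n ∈ ℝ^{d'}` be pairwise distinct, `ι_d` isometric embeddings
for `d ≥ d'`, and `ε_{1,d}, …, ε_{n,d}` jointly independent `N(0, σ²I_d)` random vectors. With
`Δ_{i,j,d} = ‖ι_d(x_i) + ε_{i,d} − (ι_d(x_j) + ε_{j,d})‖`, for each `i ≠ j` the ratio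
`‖ε_{i,d} − ε_{j,d}‖/Δ_{i,j,d}` converges to `1` in probability. -/
theorem noise_dominates_distance_in_probability
    (Ω : Type*) [MeasureSpace Ω] [IsProbabilityMeasure (ℙ : Measure Ω)]
    (n d' : ℕ) (x : Fin n → EuclideanSpace ℝ (Fin d'))
    (hx : Function.Injective x)
    (σ : ℝ) (hσ : 0 < σ)
    (ι : (d : ℕ) → EuclideanSpace ℝ (Fin d') → EuclideanSpace ℝ (Fin d))
    (hι : ∀ d, d' ≤ d → Isometry (ι d))
    (ε : (d : ℕ) → Fin n → Ω → EuclideanSpace ℝ (Fin d))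
    (hmeas : ∀ d i (k : Fin d), Measurable (fun ω => ε d i ω k))
    (hdist : ∀ d i (k : Fin d),
      Measure.map (fun ω => ε d i ω k) ℙ = gaussianReal 0 ⟨σ ^ 2, sq_nonneg σ⟩)
    (hindep : ∀ d : ℕ, iIndepFun
      (fun (p : Fin n × Fin d) ω => ε d p.1 ω p.2) ℙ)
    (i j : Fin n) (hij : i ≠ j) :
    ∀ c : ℝ, 0 < c →
      Tendsto
        (fun d : ℕ => ℙ {ω : Ω |
          c < |‖ε d i ω - ε d j ω‖ /
                ‖ι d (x i) + ε d i ω - (ι d (x j) + ε d j ω)‖ - 1|})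
        atTop (nhds 0) := by
  intro c hc
  classical
  -- Basic constants
  set C : ℝ := dist (x i) (x j) with hCdef
  have hC : 0 < C := dist_pos.mpr (fun h => hij (hx h))
  set M : ℝ := C + C / c with hMdef
  have hCM : C < M := by
    have : 0 < C / c := div_pos hC hc
    simp [hMdef]; linarith
  have hM : 0 < M := hC.trans hCM
  clear_value C M
  -- Gaussian product measure and the constant p
  set v : NNReal := ⟨σ ^ 2, sq_nonneg σ⟩ with hvdef
  set ν : Measure ℝ := gaussianReal 0 v with hν
  set A₀ : Set (ℝ × ℝ) := {q : ℝ × ℝ | 1 ≤ (q.1 - q.2) ^ 2} with hA₀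
  have hA₀m : MeasurableSet A₀ :=
    measurableSet_le measurable_const ((measurable_fst.sub measurable_snd).pow_const 2)
  set pE : ENNReal := (ν.prod ν) A₀ with hpE
  have hpEpos : 0 < pE := gaussian_pair_set_pos σ hσ
  have hpEtop : pE ≠ ⊤ := by
    have : pE ≤ 1 := prob_le_one
    exact (this.trans_lt ENNReal.one_lt_top).ne
  set p : ℝ := pE.toReal with hpdef
  have hppos : 0 < p := ENNReal.toReal_pos hpEpos.ne' hpEtop
  clear_value pE p
  -- Random variables
  set Y : (d : ℕ) → Fin d → Ω → ℝ × ℝ :=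
    fun d k ω => (ε d i ω k, ε d j ω k) with hY
  have hYm : ∀ d (k : Fin d), Measurable (Y d k) :=
    fun d k => (hmeas d i k).prodMk (hmeas d j k)
  have hmap : ∀ d (k : Fin d), Measure.map (Y d k) ℙ = ν.prod ν := by
    intro d k
    have hIF : IndepFun (fun ω => ε d i ω k) (fun ω => ε d j ω k) ℙ :=
      (hindep d).indepFun (show ((i,k) : Fin n × Fin d) ≠ (j,k) by
        simp [Prod.ext_iff, hij])
    rw [(indepFun_iff_map_prod_eq_prod_map_map (hmeas d i k).aemeasurable
      (hmeas d j k).aemeasurable).mp hIF, hdist, hdist]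
  set X : (d : ℕ) → Fin d → Ω → ℝ :=
    fun d k => (Y d k ⁻¹' A₀).indicator (fun _ => (1:ℝ)) with hX
  have hXsm : ∀ d (k : Fin d), MeasurableSet (Y d k ⁻¹' A₀) := fun d k => (hYm d k) hA₀m
  have hXm : ∀ d (k : Fin d), Measurable (X d k) :=
    fun d k => measurable_const.indicator (hXsm d k)
  have hXbound : ∀ d (k : Fin d) ω, X d k ω ∈ Set.Icc (0:ℝ) 1 := by
    intro d k ω
    by_cases h : ω ∈ Y d k ⁻¹' A₀ <;> simp [hX, h]
  have hXL2 : ∀ d (k : Fin d), MemLp (X d k) 2 ℙ := by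
    intro d k
    refine (memLp_top_of_bound (hXm d k).aestronglyMeasurable 1 (ae_of_all _ fun ω => ?_)
      ).mono_exponent le_top
    have := hXbound d k ω
    rw [Real.norm_eq_abs, abs_le]
    constructor <;> [linarith [this.1]; exact this.2]
  have hEX : ∀ d (k : Fin d), ∫ ω, X d k ω ∂ℙ = p := by
    intro d k
    rw [show (fun ω => X d k ω) = X d k from rfl, hX]
    rw [integral_indicator_const (1:ℝ) (hXsm d k)]
    rw [measureReal_def, ← Measure.map_apply (hYm d k) hA₀m, hmap d k]
    simp [hpdef, hpE]
  have hVarX : ∀ d (k : Fin d), variance (X d k) ℙ ≤ 1 := by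
    intro d k
    have := variance_le_sq_of_bounded (ae_of_all ℙ (hXbound d k)) (hXm d k).aemeasurable
    norm_num at this
    linarith
  -- pairwise independence of the X d k over k
  have hXindep : ∀ d, ∀ k l : Fin d, k ≠ l → IndepFun (X d k) (X d l) ℙ := by
    intro d k l hkl
    have hmeas' : ∀ q : Fin n × Fin d, Measurable (fun ω => ε d q.1 ω q.2) :=
      fun q => hmeas d q.1 q.2
    have h1 : IndepFun (Y d k) (Y d l) ℙ := by
      refine (hindep d).indepFun_prodMk_prodMk hmeas' (i,k) (j,k) (i,l) (j,l) ?_ ?_ ?_ ?_ <;>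
        simp [Prod.ext_iff, hkl, hij]
    have hg : Measurable (A₀.indicator (fun _ => (1:ℝ))) := measurable_const.indicator hA₀m
    have hcomp : ∀ (k : Fin d), X d k = (A₀.indicator (fun _ => (1:ℝ))) ∘ Y d k := by
      intro k
      funext ω
      simp only [hX, Function.comp_apply, Set.indicator_apply, Set.mem_preimage]
    rw [hcomp k, hcomp l]
    exact h1.comp hg hg
  -- the sums
  set S : (d : ℕ) → Ω → ℝ := fun d => ∑ k : Fin d, X d k with hS
  have hSL2 : ∀ d, MemLp (S d) 2 ℙ := fun d => memLp_finsetSum' _ (fun k _ => hXL2 d k)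
  have hES : ∀ d, ∫ ω, S d ω ∂ℙ = d * p := by
    intro d
    have : ∫ ω, S d ω ∂ℙ = ∫ ω, ∑ k : Fin d, X d k ω ∂ℙ := by
      simp [hS, Finset.sum_apply]
    rw [this, integral_finset_sum _ (fun k _ => (hXL2 d k).integrable one_le_two)]
    simp [hEX d, mul_comm]
  have hVarS : ∀ d, variance (S d) ℙ ≤ d := by
    intro d
    rw [hS, IndepFun.variance_sum (fun k _ => hXL2 d k)
      (fun k _ l _ hkl => hXindep d k l hkl)]
    calc ∑ k : Fin d, variance (X d k) ℙ ≤ ∑ _k : Fin d, (1:ℝ) :=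
          Finset.sum_le_sum (fun k _ => hVarX d k)
      _ = d := by simp
  -- Chebyshev bound for large d
  set D : ℕ := ⌈2 * M ^ 2 / p⌉₊ + 1 with hD
  clear_value D
  have hcheb : ∀ d : ℕ, D ≤ d →
      ℙ {ω : Ω | S d ω < M ^ 2} ≤ ENNReal.ofReal ((4 / p ^ 2) / d) := by
    intro d hd
    have hdp : 2 * M ^ 2 ≤ d * p := by
      have h1 : 2 * M ^ 2 / p ≤ (D : ℝ) := by
        calc (2 * M ^ 2 / p : ℝ) ≤ ⌈2 * M ^ 2 / p⌉₊ := Nat.le_ceil _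
          _ ≤ D := by simp [hD]
      have h2 : (D : ℝ) ≤ d := Nat.cast_le.mpr hd
      calc 2 * M ^ 2 = (2 * M ^ 2 / p) * p := by field_simp
        _ ≤ d * p := by nlinarith
    set t : ℝ := d * p - M ^ 2 with ht
    clear_value t
    have hM2 : 0 < M ^ 2 := pow_pos hM 2
    have htpos : 0 < t := by rw [ht]; nlinarith
    have htge : d * p / 2 ≤ t := by rw [ht]; linarith
    have hsub : {ω : Ω | S d ω < M ^ 2} ⊆ {ω : Ω | t ≤ |S d ω - ∫ ω', S d ω' ∂ℙ|} := by
      intro ω hω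
      simp only [Set.mem_setOf_eq] at hω ⊢
      rw [hES d]
      rw [abs_sub_comm, le_abs]
      left; rw [ht]; linarith
    calc ℙ {ω : Ω | S d ω < M ^ 2} ≤ ℙ {ω : Ω | t ≤ |S d ω - ∫ ω', S d ω' ∂ℙ|} :=
          measure_mono hsub
      _ ≤ ENNReal.ofReal (variance (S d) ℙ / t ^ 2) := meas_ge_le_variance_div_sq (hSL2 d) htpos
      _ ≤ ENNReal.ofReal ((4 / p ^ 2) / d) := by
          apply ENNReal.ofReal_le_ofReal
          have hdnat : 0 < d := by omega
          have hd0 : (0:ℝ) < d := by exact_mod_cast hdnat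
          have h2 : (d * p / 2) ^ 2 ≤ t ^ 2 := pow_le_pow_left₀ (by positivity) htge 2
          calc variance (S d) ℙ / t ^ 2 ≤ (d : ℝ) / (d * p / 2) ^ 2 := by
                gcongr <;> first | exact hVarS d | exact h2 | positivity
            _ = (4 / p ^ 2) / d := by
                field_simp
                ring
  -- deterministic inclusions
  have hincl : ∀ d : ℕ, d' ≤ d →
      {ω : Ω | c < |‖ε d i ω - ε d j ω‖ /
        ‖ι d (x i) + ε d i ω - (ι d (x j) + ε d j ω)‖ - 1|} ⊆ {ω : Ω | S d ω < M ^ 2} := by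
    intro d hd ω hω
    simp only [Set.mem_setOf_eq] at hω ⊢
    -- first: ‖ε i - ε j‖ < M
    have hab : ‖ι d (x i) - ι d (x j)‖ = C := by
      rw [← dist_eq_norm, (hι d hd).dist_eq]
      exact hCdef.symm
    have hN : ‖ε d i ω - ε d j ω‖ < M := by
      by_contra h
      push_neg at h
      set u := ε d i ω
      set w := ε d j ω
      set Δ := ‖ι d (x i) + u - (ι d (x j) + w)‖ with hΔ
      have hdiff : |‖u - w‖ - Δ| ≤ C := by
        have := abs_norm_sub_norm_le (u - w) (ι d (x i) + u - (ι d (x j) + w))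
        have heq : (u - w) - (ι d (x i) + u - (ι d (x j) + w)) = -(ι d (x i) - ι d (x j)) := by
          abel
        rw [heq, norm_neg, hab] at this
        exact this
      have hΔge : C / c ≤ Δ := by
        have h1 : ‖u - w‖ - Δ ≤ C := (le_abs_self _).trans hdiff
        have h2 : M ≤ ‖u - w‖ := h
        simp only [hMdef] at h2
        linarith
      have hΔpos : 0 < Δ := lt_of_lt_of_le (div_pos hC hc) hΔge
      have hratio : |‖u - w‖ / Δ - 1| ≤ c := by
        have : ‖u - w‖ / Δ - 1 = (‖u - w‖ - Δ) / Δ := by field_simp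
        rw [this, abs_div, abs_of_pos hΔpos]
        rw [div_le_iff₀ hΔpos]
        calc |‖u - w‖ - Δ| ≤ C := hdiff
          _ = c * (C / c) := by field_simp
          _ ≤ c * Δ := by
            apply mul_le_mul_of_nonneg_left hΔge hc.le
      exact absurd hω (not_lt.mpr hratio)
    -- second: S d ω ≤ ‖ε i - ε j‖ ^ 2 < M ^ 2
    have hSle : S d ω ≤ ‖ε d i ω - ε d j ω‖ ^ 2 := by
      have hnorm : ‖ε d i ω - ε d j ω‖ ^ 2 = ∑ k : Fin d, (ε d i ω k - ε d j ω k) ^ 2 := by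
        rw [EuclideanSpace.norm_eq]
        rw [Real.sq_sqrt (Finset.sum_nonneg fun k _ => sq_nonneg _)]
        refine Finset.sum_congr rfl fun k _ => ?_
        simp [Real.norm_eq_abs, sq_abs]
      rw [hnorm]
      have : S d ω = ∑ k : Fin d, X d k ω := by simp [hS, Finset.sum_apply]
      rw [this]
      apply Finset.sum_le_sum
      intro k _
      by_cases h : ω ∈ Y d k ⁻¹' A₀
      · have h1 : (1:ℝ) ≤ (ε d i ω k - ε d j ω k) ^ 2 := h
        simp only [hX, Set.indicator_of_mem h]
        exact h1
      · simp only [hX, Set.indicator_of_notMem h]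
        exact sq_nonneg _
    have : ‖ε d i ω - ε d j ω‖ ^ 2 < M ^ 2 :=
      pow_lt_pow_left₀ hN (norm_nonneg _) (by norm_num)
    linarith
  -- assemble
  have hbound : Tendsto (fun d : ℕ => ENNReal.ofReal ((4 / p ^ 2) / d)) atTop (nhds 0) := by
    have h1 : Tendsto (fun d : ℕ => ((4 / p ^ 2) / d : ℝ)) atTop (nhds 0) :=
      tendsto_const_div_atTop_nhds_zero_nat _
    have := ENNReal.tendsto_ofReal h1
    simpa using this
  refine tendsto_of_tendsto_of_tendsto_of_le_of_le' tendsto_const_nhds hbound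
    (Eventually.of_forall fun d => zero_le) ?_
  filter_upwards [eventually_ge_atTop (max d' D)] with d hd
  calc ℙ {ω : Ω | c < |‖ε d i ω - ε d j ω‖ /
        ‖ι d (x i) + ε d i ω - (ι d (x j) + ε d j ω)‖ - 1|}
      ≤ ℙ {ω : Ω | S d ω < M ^ 2} :=
        measure_mono (hincl d (le_trans (le_max_left _ _) hd))
    _ ≤ ENNReal.ofReal ((4 / p ^ 2) / d) := hcheb d (le_trans (le_max_right _ _) hd)
end

section
/- Let x_1, …, x_n (n ≥ 2) be pairwise distinct points in ℝ^{d'} and let, for each d ≥ d', ι_d : ℝ^{d'} → ℝ^d be an isometric embedding. For each d, let ε_{1,d}, …, ε_{n,d} be jointly independent random vectors each distributed as N(0, σ²I_d) with σ > 0, and set Δ_{i,j,d} = ‖ι_d(x_i) + ε_{i,d} − (ι_d(x_j) + ε_{j,d})‖. Then for every ε > 0, all four of the following probabilities tend to 1 as d → ∞: P(min_{i≠j} Δ_{i,j,d}/√d > √2·σ − ε), P(min_{i≠j} Δ_{i,j,d}/√d < √2·σ + ε), P(max_{i≠j} Δ_{i,j,d}/√d > √2·σ − ε), and P(max_{i≠j}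 Δ_{i,j,d}/√d < √2·σ + ε). -/
open MeasureTheory ProbabilityTheory Filter

open Topology Real
open scoped ENNReal

section AuxLemmas

lemma integrable_pow_mul_exp_neg_mul_sq' {b : ℝ} (hb : 0 < b) (m : ℕ) :
    Integrable (fun x : ℝ => x ^ m * Real.exp (-b * x ^ 2)) := by
  have := integrable_rpow_mul_exp_neg_mul_sq hb (s := (m : ℝ))
    (lt_of_lt_of_le neg_one_lt_zero (Nat.cast_nonneg m))
  simpa [Real.rpow_natCast] using this

lemma integral_odd_zero {f : ℝ → ℝ} (hf : ∀ x, f (-x) = - f x) :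
    ∫ x : ℝ, f x = 0 := by
  have h := integral_neg_eq_self f volume
  simp only [hf] at h
  rw [integral_neg] at h
  linarith

lemma ibp_step {b : ℝ} (hb : 0 < b) (m : ℕ) :
    ∫ x : ℝ, x ^ (m + 2) * Real.exp (-b * x ^ 2)
      = ((m + 1 : ℝ) / (2 * b)) * ∫ x : ℝ, x ^ m * Real.exp (-b * x ^ 2) := by
  have hu : ∀ x : ℝ, HasDerivAt (fun x : ℝ => x ^ (m+1)) ((m+1 : ℝ) * x ^ m) x := by
    intro x
    simpa using hasDerivAt_pow (m+1) x
  have hv : ∀ x : ℝ, HasDerivAt (fun x : ℝ => -(2*b)⁻¹ * Real.exp (-b * x ^ 2))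
      (x * Real.exp (-b * x ^ 2)) x := by
    intro x
    have h1 : HasDerivAt (fun x : ℝ => -b * x ^ 2) (-b * (2 * x)) x := by
      simpa using (hasDerivAt_pow 2 x).const_mul (-b)
    have h2 := (h1.exp).const_mul (-(2*b)⁻¹)
    refine HasDerivAt.congr_deriv h2 ?_
    field_simp
  have key := integral_mul_deriv_eq_deriv_mul_of_integrable (fun x _ => hu x) (fun x _ => hv x)
    (by
      have := integrable_pow_mul_exp_neg_mul_sq' hb (m+2)
      apply this.congr ?_
      filter_upwards with x
      simp [Pi.mul_apply]; ring)
    (by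
      have := (integrable_pow_mul_exp_neg_mul_sq' hb m).const_mul ((m+1 : ℝ) * (-(2*b)⁻¹))
      apply this.congr
      filter_upwards with x
      simp [Pi.mul_apply]; ring)
    (by
      have := (integrable_pow_mul_exp_neg_mul_sq' hb (m+1)).const_mul (-(2*b)⁻¹)
      apply this.congr
      filter_upwards with x
      simp [Pi.mul_apply]; ring)
  have e1 : ∫ x : ℝ, (x ^ (m+1)) * (x * Real.exp (-b * x ^ 2))
      = ∫ x : ℝ, x ^ (m + 2) * Real.exp (-b * x ^ 2) := by
    congr 1; funext x; ring
  have e2 : ∫ x : ℝ, ((m+1 : ℝ) * x ^ m) * (-(2*b)⁻¹ * Real.exp (-b * x ^ 2))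
      = (-(2*b)⁻¹ * (m+1 : ℝ)) * ∫ x : ℝ, x ^ m * Real.exp (-b * x ^ 2) := by
    rw [← integral_const_mul]
    congr 1; funext x; ring
  rw [e1, e2] at key
  rw [key]
  field_simp

section
variable {σ : ℝ}

lemma gpdf_eq (hσ : 0 < σ) (x : ℝ) :
    gaussianPDFReal 0 (⟨σ^2, sq_nonneg σ⟩ : NNReal) x
      = (Real.sqrt (2 * π * σ^2))⁻¹ * Real.exp (-(2*σ^2)⁻¹ * x ^ 2) := by
  unfold gaussianPDFReal
  change (√(2 * π * σ^2))⁻¹ * rexp (-(x - 0) ^ 2 / (2 * σ^2)) = _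
  congr 2
  ring

lemma integral_fun_gaussianReal (hσ : 0 < σ) (g : ℝ → ℝ) :
    ∫ x, g x ∂(gaussianReal 0 ⟨σ^2, sq_nonneg σ⟩)
      = ∫ x, gaussianPDFReal 0 (⟨σ^2, sq_nonneg σ⟩ : NNReal) x * g x := by
  have hv : (⟨σ^2, sq_nonneg σ⟩ : NNReal) ≠ 0 := by
    simp [← NNReal.coe_ne_zero]
    positivity
  rw [gaussianReal_of_var_ne_zero _ hv]
  have hd : gaussianPDF 0 (⟨σ^2, sq_nonneg σ⟩ : NNReal)
      = fun x => ((Real.toNNReal (gaussianPDFReal 0 ⟨σ^2, sq_nonneg σ⟩ x) : NNReal) : ENNReal) :=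
    rfl
  rw [hd]
  erw [integral_withDensity_eq_integral_smul
    ((measurable_gaussianPDFReal _ _).real_toNNReal) g]
  congr 1
  funext x
  erw [NNReal.smul_def, Real.coe_toNNReal _ (gaussianPDFReal_nonneg _ _ _), smul_eq_mul]

lemma integrable_fun_gaussianReal (hσ : 0 < σ) {g : ℝ → ℝ}
    (hg : Measurable g)
    (h : Integrable (fun x => gaussianPDFReal 0 (⟨σ^2, sq_nonneg σ⟩ : NNReal) x * g x)) :
    Integrable g (gaussianReal 0 ⟨σ^2, sq_nonneg σ⟩) := by
  have hv : (⟨σ^2, sq_nonneg σ⟩ : NNReal) ≠ 0 := by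
    simp [← NNReal.coe_ne_zero]; positivity
  rw [gaussianReal_of_var_ne_zero _ hv]
  have hd : gaussianPDF 0 (⟨σ^2, sq_nonneg σ⟩ : NNReal)
      = fun x => ((Real.toNNReal (gaussianPDFReal 0 ⟨σ^2, sq_nonneg σ⟩ x) : NNReal) : ENNReal) :=
    rfl
  rw [hd]
  erw [integrable_withDensity_iff_integrable_smul
    ((measurable_gaussianPDFReal _ _).real_toNNReal)]
  apply h.congr
  filter_upwards with x
  erw [NNReal.smul_def, Real.coe_toNNReal _ (gaussianPDFReal_nonneg _ _ _), smul_eq_mul]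

lemma gauss_integrable_pow (hσ : 0 < σ) (m : ℕ) :
    Integrable (fun x : ℝ => x ^ m) (gaussianReal 0 ⟨σ^2, sq_nonneg σ⟩) := by
  apply integrable_fun_gaussianReal hσ (by fun_prop)
  have hb : 0 < (2*σ^2)⁻¹ := by positivity
  have := (integrable_pow_mul_exp_neg_mul_sq' hb m).const_mul (Real.sqrt (2 * π * σ^2))⁻¹
  apply this.congr
  filter_upwards with x
  rw [gpdf_eq hσ]
  ring

lemma gauss_moment_odd (hσ : 0 < σ) (m : ℕ) (hm : Odd m) :
    ∫ x, x ^ m ∂(gaussianReal 0 ⟨σ^2, sq_nonneg σ⟩) = 0 := by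
  rw [integral_fun_gaussianReal hσ]
  apply integral_odd_zero
  intro x
  rw [gpdf_eq hσ, gpdf_eq hσ, hm.neg_pow]
  ring

lemma gauss_moment_two (hσ : 0 < σ) :
    ∫ x, x ^ 2 ∂(gaussianReal 0 ⟨σ^2, sq_nonneg σ⟩) = σ ^ 2 := by
  have hb : 0 < (2*σ^2)⁻¹ := by positivity
  have h1 : ∫ x, gaussianPDFReal 0 (⟨σ^2, sq_nonneg σ⟩ : NNReal) x = 1 :=
    integral_gaussianPDFReal_eq_one 0 (by
      have hv : (⟨σ^2, sq_nonneg σ⟩ : NNReal) ≠ 0 := by simp [← NNReal.coe_ne_zero]; positivity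
      exact hv)
  have h0 : (Real.sqrt (2 * π * σ^2))⁻¹ * ∫ x : ℝ, x ^ 0 * Real.exp (-(2*σ^2)⁻¹ * x ^ 2) = 1 := by
    rw [← integral_const_mul, ← h1]
    congr 1; funext x; rw [gpdf_eq hσ]; ring
  rw [integral_fun_gaussianReal hσ]
  have e : ∫ x, gaussianPDFReal 0 (⟨σ^2, sq_nonneg σ⟩ : NNReal) x * x ^ 2
      = (Real.sqrt (2 * π * σ^2))⁻¹ * ∫ x : ℝ, x ^ (0+2) * Real.exp (-(2*σ^2)⁻¹ * x ^ 2) := by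
    rw [← integral_const_mul]
    congr 1; funext x; rw [gpdf_eq hσ]; ring
  rw [e, ibp_step hb 0, ← mul_assoc, mul_comm ((Real.sqrt (2 * π * σ^2))⁻¹), mul_assoc, h0]
  field_simp
  norm_num

lemma gauss_moment_four (hσ : 0 < σ) :
    ∫ x, x ^ 4 ∂(gaussianReal 0 ⟨σ^2, sq_nonneg σ⟩) = 3 * σ ^ 4 := by
  have hb : 0 < (2*σ^2)⁻¹ := by positivity
  have h2 := gauss_moment_two hσ
  rw [integral_fun_gaussianReal hσ] at h2 ⊢
  have e : ∀ m : ℕ, ∫ x, gaussianPDFReal 0 (⟨σ^2, sq_nonneg σ⟩ : NNReal) x * x ^ m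
      = (Real.sqrt (2 * π * σ^2))⁻¹ * ∫ x : ℝ, x ^ m * Real.exp (-(2*σ^2)⁻¹ * x ^ 2) := by
    intro m
    rw [← integral_const_mul]
    congr 1; funext x; rw [gpdf_eq hσ]; ring
  rw [e] at h2
  rw [e, show (4 : ℕ) = 2 + 2 from rfl, ibp_step hb 2, ← mul_assoc,
    mul_comm ((Real.sqrt (2 * π * σ^2))⁻¹), mul_assoc, h2]
  field_simp
  ring

end

section
variable {Ω : Type*} [MeasureSpace Ω] [IsProbabilityMeasure (ℙ : Measure Ω)]
  {σ : ℝ} {X Y : Ω → ℝ}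

lemma pow_integrable (hσ : 0 < σ) (hXm : Measurable X)
    (hX : Measure.map X ℙ = gaussianReal 0 ⟨σ^2, sq_nonneg σ⟩) (m : ℕ) :
    Integrable (fun ω => X ω ^ m) ℙ := by
  have h := gauss_integrable_pow hσ m
  rw [← hX] at h
  exact (integrable_map_measure (measurable_id.pow_const m).aestronglyMeasurable hXm.aemeasurable).mp h

lemma pow_integral (hσ : 0 < σ) (hXm : Measurable X)
    (hX : Measure.map X ℙ = gaussianReal 0 ⟨σ^2, sq_nonneg σ⟩) (m : ℕ) :
    ∫ ω, X ω ^ m ∂ℙ = ∫ x, x ^ m ∂(gaussianReal 0 ⟨σ^2, sq_nonneg σ⟩) := by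
  rw [← hX]
  exact (integral_map hXm.aemeasurable
    ((measurable_id.pow_const m).aestronglyMeasurable)).symm

variable (hσ : 0 < σ) (hXm : Measurable X) (hYm : Measurable Y)
    (hX : Measure.map X ℙ = gaussianReal 0 ⟨σ^2, sq_nonneg σ⟩)
    (hY : Measure.map Y ℙ = gaussianReal 0 ⟨σ^2, sq_nonneg σ⟩)
    (hInd : IndepFun X Y ℙ)

include hσ hXm hYm hX hY hInd

lemma indep_pow (a b : ℕ) : IndepFun (fun ω => X ω ^ a) (fun ω => Y ω ^ b) ℙ :=
  hInd.comp (measurable_id.pow_const a) (measurable_id.pow_const b)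

lemma prod_integrable (a b : ℕ) : Integrable (fun ω => X ω ^ a * Y ω ^ b) ℙ :=
  (indep_pow hσ hXm hYm hX hY hInd a b).integrable_mul
    (pow_integrable hσ hXm hX a) (pow_integrable hσ hYm hY b)

lemma prod_integral (a b : ℕ) :
    ∫ ω, X ω ^ a * Y ω ^ b ∂ℙ
      = (∫ x, x ^ a ∂(gaussianReal 0 ⟨σ^2, sq_nonneg σ⟩))
        * ∫ x, x ^ b ∂(gaussianReal 0 ⟨σ^2, sq_nonneg σ⟩) := by
  rw [← pow_integral hσ hXm hX, ← pow_integral hσ hYm hY]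
  exact (indep_pow hσ hXm hYm hX hY hInd a b).integral_mul_eq_mul_integral
    (pow_integrable hσ hXm hX a).aestronglyMeasurable (pow_integrable hσ hYm hY b).aestronglyMeasurable

lemma sq_diff_integral : ∫ ω, (X ω - Y ω) ^ 2 ∂ℙ = 2 * σ ^ 2 := by
  have e : (fun ω => (X ω - Y ω) ^ 2)
      = fun ω => X ω ^ 2 - 2 * (X ω ^ 1 * Y ω ^ 1) + Y ω ^ 2 := by
    funext ω; ring
  rw [e, integral_add, integral_sub]
  · rw [integral_const_mul, prod_integral hσ hXm hYm hX hY hInd 1 1,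
      pow_integral hσ hXm hX, pow_integral hσ hYm hY,
      gauss_moment_odd hσ 1 odd_one, gauss_moment_two hσ]
    ring
  · exact pow_integrable hσ hXm hX 2
  · exact (prod_integrable hσ hXm hYm hX hY hInd 1 1).const_mul 2
  · exact (pow_integrable hσ hXm hX 2).sub
      ((prod_integrable hσ hXm hYm hX hY hInd 1 1).const_mul 2)
  · exact pow_integrable hσ hYm hY 2

lemma quad_diff_integrable : Integrable (fun ω => ((X ω - Y ω) ^ 2) ^ 2) ℙ := by
  have e : (fun ω => ((X ω - Y ω) ^ 2) ^ 2)
      = fun ω => X ω ^ 4 - 4 * (X ω ^ 3 * Y ω ^ 1) + 6 * (X ω ^ 2 * Y ω ^ 2)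
          - 4 * (X ω ^ 1 * Y ω ^ 3) + Y ω ^ 4 := by
    funext ω; ring
  rw [e]
  exact (((((pow_integrable hσ hXm hX 4).sub
    ((prod_integrable hσ hXm hYm hX hY hInd 3 1).const_mul 4)).add
    ((prod_integrable hσ hXm hYm hX hY hInd 2 2).const_mul 6)).sub
    ((prod_integrable hσ hXm hYm hX hY hInd 1 3).const_mul 4)).add
    (pow_integrable hσ hYm hY 4))

lemma quad_diff_integral : ∫ ω, ((X ω - Y ω) ^ 2) ^ 2 ∂ℙ = 12 * σ ^ 4 := by
  have e : (fun ω => ((X ω - Y ω) ^ 2) ^ 2)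
      = fun ω => X ω ^ 4 - 4 * (X ω ^ 3 * Y ω ^ 1) + 6 * (X ω ^ 2 * Y ω ^ 2)
          - 4 * (X ω ^ 1 * Y ω ^ 3) + Y ω ^ 4 := by
    funext ω; ring
  rw [e, integral_add, integral_sub, integral_add, integral_sub]
  · rw [integral_const_mul, integral_const_mul, integral_const_mul,
      prod_integral hσ hXm hYm hX hY hInd 3 1, prod_integral hσ hXm hYm hX hY hInd 2 2,
      prod_integral hσ hXm hYm hX hY hInd 1 3,
      pow_integral hσ hXm hX, pow_integral hσ hYm hY,
      gauss_moment_odd hσ 1 odd_one, gauss_moment_odd hσ 3 (by decide),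
      gauss_moment_two hσ, gauss_moment_four hσ]
    ring
  · exact pow_integrable hσ hXm hX 4
  · exact (prod_integrable hσ hXm hYm hX hY hInd 3 1).const_mul 4
  · exact (pow_integrable hσ hXm hX 4).sub
      ((prod_integrable hσ hXm hYm hX hY hInd 3 1).const_mul 4)
  · exact (prod_integrable hσ hXm hYm hX hY hInd 2 2).const_mul 6
  · exact ((pow_integrable hσ hXm hX 4).sub
      ((prod_integrable hσ hXm hYm hX hY hInd 3 1).const_mul 4)).add
      ((prod_integrable hσ hXm hYm hX hY hInd 2 2).const_mul 6)
  · exact (prod_integrable hσ hXm hYm hX hY hInd 1 3).const_mul 4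
  · exact (((pow_integrable hσ hXm hX 4).sub
      ((prod_integrable hσ hXm hYm hX hY hInd 3 1).const_mul 4)).add
      ((prod_integrable hσ hXm hYm hX hY hInd 2 2).const_mul 6)).sub
      ((prod_integrable hσ hXm hYm hX hY hInd 1 3).const_mul 4)
  · exact pow_integrable hσ hYm hY 4

lemma sq_diff_memℒp : MemLp (fun ω => (X ω - Y ω) ^ 2) 2 ℙ := by
  rw [memLp_two_iff_integrable_sq (f := fun ω => (X ω - Y ω) ^ 2) ((hXm.sub hYm).pow_const 2).aestronglyMeasurable]
  exact quad_diff_integrable hσ hXm hYm hX hY hInd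

lemma sq_diff_variance : variance (fun ω => (X ω - Y ω) ^ 2) ℙ = 8 * σ ^ 4 := by
  rw [variance_eq_sub (sq_diff_memℒp hσ hXm hYm hX hY hInd)]
  have e1 : ∫ ω, ((fun ω => (X ω - Y ω) ^ 2) ^ 2) ω ∂ℙ = 12 * σ ^ 4 := by
    simpa using quad_diff_integral hσ hXm hYm hX hY hInd
  rw [e1, sq_diff_integral hσ hXm hYm hX hY hInd]
  ring

end

section
variable {Ω : Type*} [MeasureSpace Ω] [IsProbabilityMeasure (ℙ : Measure Ω)]
  {n : ℕ} {σ : ℝ}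

lemma chebyshev_pair (hσ : 0 < σ) {d : ℕ}
    (ε : Fin n → Ω → EuclideanSpace ℝ (Fin d))
    (hmeas : ∀ i (k : Fin d), Measurable (fun ω => ε i ω k))
    (hdist : ∀ i (k : Fin d),
      Measure.map (fun ω => ε i ω k) ℙ = gaussianReal 0 ⟨σ ^ 2, sq_nonneg σ⟩)
    (hindep : iIndepFun (fun (p : Fin n × Fin d) ω => ε p.1 ω p.2) ℙ)
    {i j : Fin n} (hij : i ≠ j) {δ : ℝ} (hδ : 0 < δ) :
    ℙ {ω | δ ≤ |(∑ k : Fin d, (ε i ω k - ε j ω k) ^ 2) - 2 * σ ^ 2 * d|}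
      ≤ ENNReal.ofReal (8 * σ ^ 4 * d / δ ^ 2) := by
  set Z : Fin d → Ω → ℝ := fun k ω => (ε i ω k - ε j ω k) ^ 2 with hZ
  have hfmeas : ∀ p : Fin n × Fin d, Measurable (fun ω => ε p.1 ω p.2) :=
    fun p => hmeas p.1 p.2
  have hZind : ∀ k, IndepFun (fun ω => ε i ω k) (fun ω => ε j ω k) ℙ := by
    intro k
    exact hindep.indepFun (i := (i, k)) (j := (j, k)) (by simp [hij])
  have hZmem : ∀ k, MemLp (Z k) 2 ℙ := fun k =>
    sq_diff_memℒp hσ (hmeas i k) (hmeas j k) (hdist i k) (hdist j k) (hZind k)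
  have hZint : ∀ k, ∫ ω, Z k ω ∂ℙ = 2 * σ ^ 2 := fun k =>
    sq_diff_integral hσ (hmeas i k) (hmeas j k) (hdist i k) (hdist j k) (hZind k)
  have hZvar : ∀ k, variance (Z k) ℙ = 8 * σ ^ 4 := fun k =>
    sq_diff_variance hσ (hmeas i k) (hmeas j k) (hdist i k) (hdist j k) (hZind k)
  have hSmem : MemLp (∑ k : Fin d, Z k) 2 ℙ :=
    memLp_finsetSum' _ (fun k _ => hZmem k)
  have hSpair : Set.Pairwise ↑(Finset.univ : Finset (Fin d))
      (fun k l => IndepFun (Z k) (Z l) ℙ) := by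
    intro k _ l _ hkl
    have h := hindep.indepFun_prodMk_prodMk hfmeas (i, k) (j, k) (i, l) (j, l)
      (by simp [hkl]) (by simp [hij, hkl]) (by simp [hij, hkl]) (by simp [hkl])
    exact h.comp (measurable_fst.sub measurable_snd |>.pow_const 2)
      (measurable_fst.sub measurable_snd |>.pow_const 2)
  have hSvar : variance (∑ k : Fin d, Z k) ℙ = 8 * σ ^ 4 * d := by
    rw [IndepFun.variance_sum (fun k _ => hZmem k) hSpair]
    simp [hZvar, Finset.sum_const, mul_comm]
  have hSint : ℙ[∑ k : Fin d, Z k] = 2 * σ ^ 2 * d := by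
    have : ∀ ω, (∑ k : Fin d, Z k) ω = ∑ k : Fin d, Z k ω := by
      intro ω; simp [Finset.sum_apply]
    calc ℙ[∑ k : Fin d, Z k] = ∫ ω, ∑ k : Fin d, Z k ω ∂ℙ := by
          congr 1; funext ω; exact this ω
      _ = ∑ k : Fin d, ∫ ω, Z k ω ∂ℙ :=
          integral_finset_sum _ (fun k _ => (hZmem k).integrable one_le_two)
      _ = 2 * σ ^ 2 * d := by simp [hZint, Finset.sum_const, mul_comm]
  have hset : {ω | δ ≤ |(∑ k : Fin d, (ε i ω k - ε j ω k) ^ 2) - 2 * σ ^ 2 * d|}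
      = {ω | δ ≤ |(∑ k : Fin d, Z k) ω - ℙ[∑ k : Fin d, Z k]|} := by
    rw [hSint]
    ext ω
    simp [Finset.sum_apply, hZ]
  rw [hset]
  refine le_trans (meas_ge_le_variance_div_sq hSmem hδ) ?_
  rw [hSvar]

end

end AuxLemmas

/-- In the setting of pairwise distinct points with isometric embeddings and
independent Gaussian noise `N(0, σ²I_d)`, for every `c > 0` all four probabilities
`P(min_{i≠j} Δ_{i,j,d}/√d > √2σ − c)`, `P(min_{i≠j} Δ_{i,j,d}/√d < √2σ + c)`,
`P(max_{i≠j} Δ_{i,j,d}/√d > √2σ − c)`, `P(max_{i≠j} Δ_{i,j,d}/√d < √2σ + c)` tend to `1`. -/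
theorem min_max_noisy_distance_concentration
    (Ω : Type*) [MeasureSpace Ω] [IsProbabilityMeasure (ℙ : Measure Ω)]
    (n d' : ℕ) (hn : 2 ≤ n) (x : Fin n → EuclideanSpace ℝ (Fin d'))
    (hx : Function.Injective x)
    (σ : ℝ) (hσ : 0 < σ)
    (ι : (d : ℕ) → EuclideanSpace ℝ (Fin d') → EuclideanSpace ℝ (Fin d))
    (hι : ∀ d, d' ≤ d → Isometry (ι d))
    (ε : (d : ℕ) → Fin n → Ω → EuclideanSpace ℝ (Fin d))
    (hmeas : ∀ d i (k : Fin d), Measurable (fun ω => ε d i ω k))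
    (hdist : ∀ d i (k : Fin d),
      Measure.map (fun ω => ε d i ω k) ℙ = gaussianReal 0 ⟨σ ^ 2, sq_nonneg σ⟩)
    (hindep : ∀ d : ℕ, iIndepFun
      (fun (p : Fin n × Fin d) ω => ε d p.1 ω p.2) ℙ)
    (Δ : (d : ℕ) → Fin n → Fin n → Ω → ℝ)
    (hΔ : ∀ d i j ω, Δ d i j ω = ‖ι d (x i) + ε d i ω - (ι d (x j) + ε d j ω)‖) :
    ∀ c : ℝ, 0 < c →
      (Tendsto (fun d : ℕ => ℙ {ω : Ω |
          Real.sqrt 2 * σ - c <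
            ⨅ p : {p : Fin n × Fin n // p.1 ≠ p.2}, Δ d p.1.1 p.1.2 ω / Real.sqrt d})
        atTop (nhds 1)) ∧
      (Tendsto (fun d : ℕ => ℙ {ω : Ω |
          (⨅ p : {p : Fin n × Fin n // p.1 ≠ p.2}, Δ d p.1.1 p.1.2 ω / Real.sqrt d) <
            Real.sqrt 2 * σ + c})
        atTop (nhds 1)) ∧
      (Tendsto (fun d : ℕ => ℙ {ω : Ω |
          Real.sqrt 2 * σ - c <
            ⨆ p : {p : Fin n × Fin n // p.1 ≠ p.2}, Δ d p.1.1 p.1.2 ω / Real.sqrt d})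
        atTop (nhds 1)) ∧
      (Tendsto (fun d : ℕ => ℙ {ω : Ω |
          (⨆ p : {p : Fin n × Fin n // p.1 ≠ p.2}, Δ d p.1.1 p.1.2 ω / Real.sqrt d) <
            Real.sqrt 2 * σ + c})
        atTop (nhds 1)) := by
  intro c hc
  set s : ℝ := Real.sqrt 2 * σ with hs_def
  have hs : 0 < s := by
    apply mul_pos _ hσ
    simp [Real.sqrt_pos]
  have hs2 : s ^ 2 = 2 * σ ^ 2 := by
    rw [hs_def, mul_pow, Real.sq_sqrt (by norm_num : (2:ℝ) ≥ 0)]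
  set δ : ℝ := s * c / 2 with hδ_def
  have hδ : 0 < δ := by positivity
  -- the index type of pairs
  haveI hPne : Nonempty {p : Fin n × Fin n // p.1 ≠ p.2} := by
    refine ⟨⟨(⟨0, by omega⟩, ⟨1, by omega⟩), ?_⟩⟩
    simp [Fin.ext_iff]
  -- bad events
  set B : (d : ℕ) → {p : Fin n × Fin n // p.1 ≠ p.2} → Set Ω := fun d p =>
    {ω | δ * d ≤ |(∑ k : Fin d, (ε d p.1.1 ω k - ε d p.1.2 ω k) ^ 2) - 2 * σ ^ 2 * d|}
    with hB_def
  set E : (d : ℕ) → Set Ω := fun d => ⋂ p, (B d p)ᶜ with hE_def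
  set N : ℕ := Fintype.card {p : Fin n × Fin n // p.1 ≠ p.2} with hN_def
  set C : ℝ := N * (8 * σ ^ 4 / δ ^ 2) with hC_def
  -- Chebyshev bound on complement of good event
  have hEc : ∀ d : ℕ, 1 ≤ d → ℙ (E d)ᶜ ≤ ENNReal.ofReal (C / d) := by
    intro d hd1
    have hdpos : (0:ℝ) < d := by exact_mod_cast hd1
    have h1 : (E d)ᶜ = ⋃ p, B d p := by
      rw [hE_def]; simp [Set.compl_iInter]
    have h2 : ∀ p : {p : Fin n × Fin n // p.1 ≠ p.2},
        ℙ (B d p) ≤ ENNReal.ofReal (8 * σ ^ 4 * d / (δ * d) ^ 2) := by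
      intro p
      exact chebyshev_pair hσ (ε d) (hmeas d) (hdist d) (hindep d) p.2
        (by positivity)
    have h3 : (8 : ℝ) * σ ^ 4 * d / (δ * d) ^ 2 = (8 * σ ^ 4 / δ ^ 2) / d := by
      field_simp
    calc ℙ (E d)ᶜ ≤ ∑ p : {p : Fin n × Fin n // p.1 ≠ p.2}, ℙ (B d p) := by
          rw [h1]; exact measure_iUnion_fintype_le _ _
      _ ≤ ∑ _p : {p : Fin n × Fin n // p.1 ≠ p.2},
            ENNReal.ofReal (8 * σ ^ 4 * d / (δ * d) ^ 2) :=
          Finset.sum_le_sum (fun p _ => h2 p)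
      _ = N * ENNReal.ofReal ((8 * σ ^ 4 / δ ^ 2) / d) := by
          rw [Finset.sum_const, h3, Finset.card_univ, hN_def, nsmul_eq_mul]
      _ = ENNReal.ofReal (C / d) := by
          rw [← ENNReal.ofReal_natCast N, ← ENNReal.ofReal_mul (by positivity), hC_def]
          ring_nf
  -- the lower bound tends to 1
  have hlow : Tendsto (fun d : ℕ => 1 - ENNReal.ofReal (C / d)) atTop (𝓝 1) := by
    have h0 : Tendsto (fun d : ℕ => ENNReal.ofReal (C / d)) atTop (𝓝 0) := by
      have := ENNReal.tendsto_ofReal (tendsto_const_div_atTop_nhds_zero_nat C)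
      simpa using this
    have := ENNReal.Tendsto.sub (tendsto_const_nhds : Tendsto _ atTop (𝓝 (1:ENNReal))) h0
      (Or.inl ENNReal.one_ne_top)
    simpa using this
  -- deterministic part: eventually, on E d all normalized distances are within c of s
  have hdet : ∀ᶠ d : ℕ in atTop, ∀ ω ∈ E d,
      ∀ p : {p : Fin n × Fin n // p.1 ≠ p.2}, |Δ d p.1.1 p.1.2 ω / Real.sqrt d - s| < c := by
    obtain ⟨pm, hpm⟩ := Finite.exists_max
      (fun p : {p : Fin n × Fin n // p.1 ≠ p.2} => dist (x p.1.1) (x p.1.2))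
    set K : ℝ := dist (x pm.1.1) (x pm.1.2) with hK_def
    have hK0 : 0 ≤ K := dist_nonneg
    obtain ⟨D, hD⟩ := exists_nat_gt ((2 * K / c) ^ 2)
    filter_upwards [eventually_ge_atTop d', eventually_ge_atTop 1, eventually_ge_atTop D]
      with d hdd' hd1 hdD ω hω p
    have hdpos : (0:ℝ) < d := by exact_mod_cast hd1
    have hsd : (0:ℝ) < Real.sqrt d := Real.sqrt_pos.mpr hdpos
    have hsd2 : Real.sqrt d ^ 2 = d := Real.sq_sqrt hdpos.le
    -- K / sqrt d < c / 2
    have hKd : K / Real.sqrt d < c / 2 := by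
      have h1 : 2 * K / c < Real.sqrt d := by
        calc 2 * K / c ≤ |2 * K / c| := le_abs_self _
          _ = Real.sqrt ((2 * K / c) ^ 2) := (Real.sqrt_sq_eq_abs _).symm
          _ < Real.sqrt D := Real.sqrt_lt_sqrt (sq_nonneg _) hD
          _ ≤ Real.sqrt d := Real.sqrt_le_sqrt (by exact_mod_cast hdD)
      rw [div_lt_div_iff₀ hsd (by norm_num : (0:ℝ) < 2)]
      rw [div_lt_iff₀ hc] at h1
      linarith
    set i := p.1.1
    set j := p.1.2
    have hij : i ≠ j := p.2
    -- the good event bound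
    have hωp : |(∑ k : Fin d, (ε d i ω k - ε d j ω k) ^ 2) - 2 * σ ^ 2 * d| < δ * d := by
      have := Set.mem_iInter.mp hω p
      simp only [hB_def, Set.mem_compl_iff, Set.mem_setOf_eq, not_le] at this
      exact this
    set w : EuclideanSpace ℝ (Fin d) := ε d i ω - ε d j ω with hw_def
    have hwnorm : ‖w‖ ^ 2 = ∑ k : Fin d, (ε d i ω k - ε d j ω k) ^ 2 := by
      rw [EuclideanSpace.norm_eq, Real.sq_sqrt (by positivity)]
      congr 1
      funext k
      rw [hw_def]
      simp [Real.norm_eq_abs, sq_abs]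
    set t : ℝ := ‖w‖ / Real.sqrt d with ht_def
    have ht0 : 0 ≤ t := by positivity
    have ht2 : |t ^ 2 - s ^ 2| < δ := by
      rw [ht_def, div_pow, hsd2, hwnorm, hs2]
      rw [abs_sub_lt_iff]
      constructor
      · rw [div_sub' hdpos.ne', div_lt_iff₀ hdpos]
        have := (abs_sub_lt_iff.mp hωp).1
        linarith
      · rw [sub_div' hdpos.ne', div_lt_iff₀ hdpos]
        have := (abs_sub_lt_iff.mp hωp).2
        linarith
    have hts : |t - s| < c / 2 := by
      have h1 : |t - s| * s ≤ |t - s| * (t + s) :=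
        mul_le_mul_of_nonneg_left (by linarith) (abs_nonneg _)
      have h2 : |t - s| * (t + s) = |t ^ 2 - s ^ 2| := by
        rw [← abs_of_nonneg (by linarith : 0 ≤ t + s), ← abs_mul]
        congr 1
        ring
      have h3 : |t - s| * s < δ := by rw [← h2] at ht2; linarith
      rw [hδ_def] at h3
      rw [← lt_div_iff₀ hs] at h3
      calc |t - s| < s * c / 2 / s := h3
        _ = c / 2 := by field_simp
    -- distance to t
    have hΔt : |Δ d i j ω / Real.sqrt d - t| < c / 2 := by
      have hd1 : Δ d i j ω = ‖(ι d (x i) - ι d (x j)) + w‖ := by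
        rw [hΔ, hw_def, add_sub_add_comm]
      have hd2 : |Δ d i j ω - ‖w‖| ≤ K := by
        rw [hd1]
        calc |‖(ι d (x i) - ι d (x j)) + w‖ - ‖w‖| ≤ ‖(ι d (x i) - ι d (x j)) + w - w‖ :=
              abs_norm_sub_norm_le _ _
          _ = ‖ι d (x i) - ι d (x j)‖ := by rw [add_sub_cancel_right]
          _ = dist (x i) (x j) := by
              rw [← dist_eq_norm]
              exact (hι d hdd').dist_eq _ _
          _ ≤ K := hpm p
      calc |Δ d i j ω / Real.sqrt d - t| = |Δ d i j ω - ‖w‖| / Real.sqrt d := by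
            rw [ht_def, div_sub_div_same, abs_div, abs_of_pos hsd]
        _ ≤ K / Real.sqrt d := by gcongr
        _ < c / 2 := hKd
    calc |Δ d i j ω / Real.sqrt d - s|
        ≤ |Δ d i j ω / Real.sqrt d - t| + |t - s| := abs_sub_le _ _ _
      _ < c / 2 + c / 2 := add_lt_add hΔt hts
      _ = c := by ring
  -- generic convergence builder
  have key : ∀ T : ℕ → Set Ω, (∀ᶠ d : ℕ in atTop, E d ⊆ T d) →
      Tendsto (fun d : ℕ => ℙ (T d)) atTop (𝓝 1) := by
    intro T hT
    apply tendsto_of_tendsto_of_tendsto_of_le_of_le' hlow tendsto_const_nhds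
    · filter_upwards [hT, eventually_ge_atTop 1] with d hTd hd1
      calc 1 - ENNReal.ofReal (C / d) ≤ 1 - ℙ (E d)ᶜ := tsub_le_tsub_left (hEc d hd1) 1
        _ ≤ ℙ (E d) := by
            rw [tsub_le_iff_right]
            calc (1:ℝ≥0∞) = ℙ (Set.univ : Set Ω) := (measure_univ (μ := ℙ)).symm
              _ = ℙ (E d ∪ (E d)ᶜ) := by rw [Set.union_compl_self]
              _ ≤ ℙ (E d) + ℙ (E d)ᶜ := measure_union_le _ _
        _ ≤ ℙ (T d) := measure_mono hTd
    · filter_upwards with d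
      exact prob_le_one
  refine ⟨key _ ?_, key _ ?_, key _ ?_, key _ ?_⟩ <;>
  · filter_upwards [hdet] with d hd ω hω
    have hb := hd ω hω
    set f : {p : Fin n × Fin n // p.1 ≠ p.2} → ℝ :=
      fun p => Δ d p.1.1 p.1.2 ω / Real.sqrt d with hf_def
    have hball : ∀ p, s - c < f p ∧ f p < s + c := by
      intro p
      have := abs_lt.mp (hb p)
      constructor <;> [linarith [this.1]; linarith [this.2]]
    obtain ⟨pmin, hpmin⟩ := Finite.exists_min f
    obtain ⟨pmax, hpmax⟩ := Finite.exists_max f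
    simp only [Set.mem_setOf_eq]
    first
      | exact lt_of_lt_of_le (hball pmin).1 (le_ciInf hpmin)
      | exact lt_of_le_of_lt (ciInf_le (Set.finite_range f).bddBelow pmin) (hball pmin).2
      | exact lt_of_lt_of_le (hball pmax).1 (le_ciSup (Set.finite_range f).bddAbove pmax)
      | exact lt_of_le_of_lt (ciSup_le hpmax) (hball pmax).2
end

section
/- Fix a positive integer m and let D be a persistence diagram with at least m points (counted with multiplicity). Then the hole detection score s_m is continuous at D with respect to the bottleneck distance: for every ε > 0 there exists δ > 0 such that every persistence diagram D' with d_B(D, D') < δ satisfies |s_m(D') − s_m(D)| < ε. -/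
/-- A persistence diagram: a finite multiset of points `(b, e) ∈ ℝ²` with `b < e`. -/
def IsPersistenceDiagram (D : Multiset (ℝ × ℝ)) : Prop :=
  ∀ x ∈ D, x.1 < x.2

/-- Cost of a partial matching `M` (a multiset of matched pairs whose first and second
projections are sub-multisets of `D` and `D'` respectively): the maximum of the `ℓ∞` distances
over matched pairs and of half the persistences over unmatched points (`0` for the empty
matching of two empty diagrams). -/
noncomputable def matchingCost (D D' : Multiset (ℝ × ℝ))
    (M : Multiset ((ℝ × ℝ) × (ℝ × ℝ))) : ℝ :=
  ((M.map fun q : (ℝ × ℝ) × (ℝ × ℝ) => max |q.1.1 - q.2.1| |q.1.2 - q.2.2|) +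
    ((D - M.map Prod.fst) + (D' - M.map Prod.snd)).map
      fun x : ℝ × ℝ => (x.2 - x.1) / 2).fold max 0

/-- The bottleneck distance between persistence diagrams: the infimum of the costs over all
partial matchings. -/
noncomputable def bottleneckDist (D D' : Multiset (ℝ × ℝ)) : ℝ :=
  sInf {c : ℝ | ∃ M : Multiset ((ℝ × ℝ) × (ℝ × ℝ)),
    M.map Prod.fst ≤ D ∧ M.map Prod.snd ≤ D' ∧ c = matchingCost D D' M}

/-- `persistenceRank m D`: the `m`-th largest persistence among the points of `D` counted with
multiplicity, defined to be `0` if `D` has fewer than `m` points. -/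
noncomputable def persistenceRank (m : ℕ) (D : Multiset (ℝ × ℝ)) : ℝ :=
  let l := (D.map fun x => x.2 - x.1).sort (· ≤ ·)
  if m ≤ l.length then l.getD (l.length - m) 0 else 0

/-- The hole detection score `s_m`. -/
noncomputable def holeDetectionScore (m : ℕ) (D : Multiset (ℝ × ℝ)) : ℝ :=
  if 0 < persistenceRank m D then
    (persistenceRank m D - persistenceRank (m + 1) D) / persistenceRank m D
  else 0

section Aux

/-- every element is ≤ fold max 0 -/
lemma le_fold_max (s : Multiset ℝ) {a : ℝ} (h : a ∈ s) : a ≤ s.fold max 0 := by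
  induction s using Multiset.induction_on with
  | empty => simp at h
  | cons b s ih =>
    rw [Multiset.fold_cons_left]
    rcases Multiset.mem_cons.mp h with h | h
    · subst h; exact le_max_left _ _
    · exact le_trans (ih h) (le_max_right _ _)

lemma fold_max_nonneg (s : Multiset ℝ) : 0 ≤ s.fold max 0 := by
  induction s using Multiset.induction_on with
  | empty => simp
  | cons b s ih =>
    rw [Multiset.fold_cons_left]
    exact le_trans ih (le_max_right _ _)

lemma my_countP_mono {α : Type*} (s : Multiset α) (p q : α → Prop)
    [DecidablePred p] [DecidablePred q] (h : ∀ x ∈ s, p x → q x) :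
    s.countP p ≤ s.countP q := by
  induction s using Multiset.induction_on with
  | empty => simp
  | cons b s ih =>
    simp only [Multiset.countP_cons]
    have hb := h b (Multiset.mem_cons_self _ _)
    have := ih fun x hx => h x (Multiset.mem_cons_of_mem hx)
    by_cases hp : p b
    · simp [hp, hb hp]; omega
    · simp [hp]
      split <;> omega

lemma list1 (l : List ℝ) (hs : l.Pairwise (· ≤ ·)) (k : ℕ) (hk : 1 ≤ k)
    (hkl : k ≤ l.length) :
    k ≤ l.countP (fun a => decide (l.getD (l.length - k) 0 ≤ a)) := by
  set i := l.length - k with hi_def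
  have hi : i < l.length := by omega
  have hgd : l.getD i 0 = l.get ⟨i, hi⟩ := by
    rw [List.getD_eq_getElem l 0 hi]; rfl
  have hsplit := List.take_append_drop i l
  have hcount : l.countP (fun a => decide (l.getD i 0 ≤ a)) =
      (l.take i).countP (fun a => decide (l.getD i 0 ≤ a)) +
      (l.drop i).countP (fun a => decide (l.getD i 0 ≤ a)) := by
    rw [← List.countP_append, hsplit]
  have hdrop : (l.drop i).countP (fun a => decide (l.getD i 0 ≤ a)) =
      (l.drop i).length := by
    rw [List.countP_eq_length]
    intro a ha
    obtain ⟨j, hj, rfl⟩ := List.mem_iff_getElem.mp ha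
    rw [List.getElem_drop]
    have hij : i + j < l.length := by
      have := List.length_drop (i := i) (l := l); omega
    simp only [decide_eq_true_eq, hgd]
    exact hs.rel_get_of_le (a := ⟨i, hi⟩) (b := ⟨i + j, hij⟩) (by simp)
  have hlen : (l.drop i).length = k := by
    rw [List.length_drop]; omega
  omega

lemma list2 (l : List ℝ) (hs : l.Pairwise (· ≤ ·)) (k : ℕ) (r : ℝ) (hk : 1 ≤ k)
    (h : k ≤ l.countP (fun a => decide (r ≤ a))) :
    r ≤ l.getD (l.length - k) 0 := by
  have hkl : k ≤ l.length := le_trans h List.countP_le_length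
  set i := l.length - k with hi_def
  have hi : i < l.length := by omega
  rw [List.getD_eq_getElem l 0 hi]
  by_contra hlt
  push_neg at hlt
  have hsplit := List.take_append_drop (i + 1) l
  have hcount : l.countP (fun a => decide (r ≤ a)) =
      (l.take (i + 1)).countP (fun a => decide (r ≤ a)) +
      (l.drop (i + 1)).countP (fun a => decide (r ≤ a)) := by
    rw [← List.countP_append, hsplit]
  have htake : (l.take (i + 1)).countP (fun a => decide (r ≤ a)) = 0 := by
    rw [List.countP_eq_zero]
    intro a ha
    obtain ⟨j, hj, rfl⟩ := List.mem_iff_getElem.mp ha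
    have hj' : j < i + 1 := by
      have h2 := hj
      rw [List.length_take] at h2
      omega
    rw [List.getElem_take]
    simp only [decide_eq_true_eq, not_le]
    calc l[j] ≤ l[i] := hs.rel_get_of_le (a := ⟨j, by omega⟩) (b := ⟨i, hi⟩) (by simp; omega)
    _ < r := hlt
  have hd := List.countP_le_length (l := l.drop (i + 1)) (p := fun a => decide (r ≤ a))
  rw [List.length_drop] at hd
  rw [hcount, htake] at h
  omega

end Aux

section Rank

lemma persRank_eq_zero_of_card_lt {k : ℕ} {D : Multiset (ℝ × ℝ)}
    (h : ¬ k ≤ Multiset.card D) : persistenceRank k D = 0 := by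
  simp only [persistenceRank, Multiset.length_sort, Multiset.card_map]
  rw [if_neg h]

lemma persRank_pos {k : ℕ} (hk : 1 ≤ k) {D : Multiset (ℝ × ℝ)}
    (hD : IsPersistenceDiagram D) (hcard : k ≤ Multiset.card D) :
    0 < persistenceRank k D := by
  simp only [persistenceRank]
  set l := (D.map fun x => x.2 - x.1).sort (· ≤ ·) with hl
  have hlen : l.length = Multiset.card D := by
    rw [hl, Multiset.length_sort, Multiset.card_map]
  rw [if_pos (by omega)]
  have hi : l.length - k < l.length := by omega
  rw [List.getD_eq_getElem l 0 hi]
  have hmem : l[l.length - k] ∈ l := List.getElem_mem _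
  have : l[l.length - k] ∈ (D.map fun x => x.2 - x.1) := by
    rw [← Multiset.mem_sort (· ≤ ·)]; exact hmem
  obtain ⟨x, hx, hval⟩ := Multiset.mem_map.mp this
  rw [← hval]
  have := hD x hx
  linarith

lemma persRank_nonneg (k : ℕ) {D : Multiset (ℝ × ℝ)}
    (hD : IsPersistenceDiagram D) : 0 ≤ persistenceRank k D := by
  rcases Nat.eq_zero_or_pos k with rfl | hk
  · simp only [persistenceRank]
    split
    · rw [List.getD_eq_default]; omega
    · rfl
  · by_cases h : k ≤ Multiset.card D
    · exact le_of_lt (persRank_pos hk hD h)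
    · rw [persRank_eq_zero_of_card_lt h]

lemma persCountP_rank {k : ℕ} (hk : 1 ≤ k) {D : Multiset (ℝ × ℝ)}
    (hcard : k ≤ Multiset.card D) :
    k ≤ Multiset.countP (fun a => persistenceRank k D ≤ a)
      (D.map fun x => x.2 - x.1) := by
  set l := (D.map fun x => x.2 - x.1).sort (· ≤ ·) with hl
  have hlen : l.length = Multiset.card D := by
    rw [hl, Multiset.length_sort, Multiset.card_map]
  have hsort : l.Pairwise (· ≤ ·) := Multiset.pairwise_sort _ _
  have hcp : Multiset.countP (fun a => persistenceRank k D ≤ a)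
      (D.map fun x => x.2 - x.1) =
      l.countP (fun a => decide (persistenceRank k D ≤ a)) := by
    rw [← Multiset.coe_countP]
    congr 1
    rw [hl, Multiset.sort_eq]
  rw [hcp]
  have hrk : persistenceRank k D = l.getD (l.length - k) 0 := by
    simp only [persistenceRank]
    rw [← hl, if_pos (by omega)]
  rw [hrk]
  exact list1 l hsort k hk (by omega)

lemma persRank_ge {k : ℕ} (hk : 1 ≤ k) {D : Multiset (ℝ × ℝ)} {r : ℝ}
    (h : k ≤ Multiset.countP (fun a => r ≤ a) (D.map fun x => x.2 - x.1)) :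
    r ≤ persistenceRank k D := by
  set l := (D.map fun x => x.2 - x.1).sort (· ≤ ·) with hl
  have hsort : l.Pairwise (· ≤ ·) := Multiset.pairwise_sort _ _
  have hcp : Multiset.countP (fun a => r ≤ a) (D.map fun x => x.2 - x.1) =
      l.countP (fun a => decide (r ≤ a)) := by
    rw [← Multiset.coe_countP]
    congr 1
    rw [hl, Multiset.sort_eq]
  rw [hcp] at h
  have hkl : k ≤ l.length := le_trans h List.countP_le_length
  have hrk : persistenceRank k D = l.getD (l.length - k) 0 := by
    simp only [persistenceRank]
    rw [← hl, if_pos (by omega)]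
  rw [hrk]
  exact list2 l hsort k r hk h

end Rank

section Cost

lemma matchingCost_nonneg (D D' : Multiset (ℝ × ℝ)) (M : Multiset ((ℝ × ℝ) × (ℝ × ℝ))) :
    0 ≤ matchingCost D D' M := fold_max_nonneg _

lemma cost_pair {D D' : Multiset (ℝ × ℝ)} {M : Multiset ((ℝ × ℝ) × (ℝ × ℝ))}
    {q : (ℝ × ℝ) × (ℝ × ℝ)} (hq : q ∈ M) :
    max |q.1.1 - q.2.1| |q.1.2 - q.2.2| ≤ matchingCost D D' M := by
  apply le_fold_max
  exact Multiset.mem_add.mpr (Or.inl (Multiset.mem_map_of_mem _ hq))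

lemma cost_unmatched_left {D D' : Multiset (ℝ × ℝ)} {M : Multiset ((ℝ × ℝ) × (ℝ × ℝ))}
    {x : ℝ × ℝ} (hx : x ∈ D - M.map Prod.fst) :
    (x.2 - x.1) / 2 ≤ matchingCost D D' M := by
  apply le_fold_max
  apply Multiset.mem_add.mpr (Or.inr _)
  exact Multiset.mem_map_of_mem _ (Multiset.mem_add.mpr (Or.inl hx))

lemma cost_swap (D D' : Multiset (ℝ × ℝ)) (M : Multiset ((ℝ × ℝ) × (ℝ × ℝ))) :
    matchingCost D' D (M.map Prod.swap) = matchingCost D D' M := by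
  unfold matchingCost
  have h1 : (M.map Prod.swap).map Prod.fst = M.map Prod.snd := by
    rw [Multiset.map_map]; rfl
  have h2 : (M.map Prod.swap).map Prod.snd = M.map Prod.fst := by
    rw [Multiset.map_map]; rfl
  rw [Multiset.map_map, h1, h2]
  congr 1
  congr 1
  · apply Multiset.map_congr rfl
    intro q _
    show max |q.2.1 - q.1.1| |q.2.2 - q.1.2| = _
    rw [abs_sub_comm q.2.1, abs_sub_comm q.2.2]
  · rw [add_comm]

lemma rank_stab_one (k : ℕ) (hk : 1 ≤ k) {D D' : Multiset (ℝ × ℝ)}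
    (hD : IsPersistenceDiagram D) (hD' : IsPersistenceDiagram D')
    {M : Multiset ((ℝ × ℝ) × (ℝ × ℝ))}
    (h1 : M.map Prod.fst ≤ D) (h2 : M.map Prod.snd ≤ D') :
    persistenceRank k D ≤ persistenceRank k D' + 2 * matchingCost D D' M := by
  set c := matchingCost D D' M with hc
  have hc0 : 0 ≤ c := matchingCost_nonneg _ _ _
  by_cases hr : persistenceRank k D ≤ 2 * c
  · have := persRank_nonneg k hD'
    linarith
  push_neg at hr
  set r := persistenceRank k D with hrdef
  have hrpos : 0 < r := by linarith
  have hcard : k ≤ Multiset.card D := by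
    by_contra h
    rw [persRank_eq_zero_of_card_lt h] at hrdef
    rw [hrdef] at hrpos; linarith [hrpos]
  have hcp := persCountP_rank hk hcard
  rw [← hrdef] at hcp
  -- decompose D
  have hdec : D = M.map Prod.fst + (D - M.map Prod.fst) := (add_tsub_cancel_of_le h1).symm
  have hsplit : Multiset.countP (fun a => r ≤ a) (D.map fun x => x.2 - x.1) =
      Multiset.countP (fun a => r ≤ a) ((M.map Prod.fst).map fun x => x.2 - x.1) +
      Multiset.countP (fun a => r ≤ a) ((D - M.map Prod.fst).map fun x => x.2 - x.1) := by
    conv_lhs => rw [hdec]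
    rw [Multiset.map_add, Multiset.countP_add]
  have hzero : Multiset.countP (fun a => r ≤ a)
      ((D - M.map Prod.fst).map fun x => x.2 - x.1) = 0 := by
    rw [Multiset.countP_eq_zero]
    intro a ha
    obtain ⟨x, hx, rfl⟩ := Multiset.mem_map.mp ha
    have := cost_unmatched_left (D' := D') (M := M) hx
    rw [← hc] at this
    intro hcontra
    linarith
  have hM1 : k ≤ Multiset.countP (fun q : (ℝ × ℝ) × (ℝ × ℝ) => r ≤ q.1.2 - q.1.1) M := by
    have : Multiset.countP (fun a => r ≤ a) ((M.map Prod.fst).map fun x => x.2 - x.1) =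
        Multiset.countP (fun q : (ℝ × ℝ) × (ℝ × ℝ) => r ≤ q.1.2 - q.1.1) M := by
      rw [Multiset.map_map, Multiset.countP_map, Multiset.countP_eq_card_filter]
      rfl
    omega
  have hM2 : k ≤ Multiset.countP (fun q : (ℝ × ℝ) × (ℝ × ℝ) => r - 2 * c ≤ q.2.2 - q.2.1) M := by
    refine le_trans hM1 (my_countP_mono _ _ _ ?_)
    intro q hq hle
    have hcost := cost_pair (D := D) (D' := D') hq
    rw [← hc] at hcost
    have hb := abs_le.mp (le_trans (le_max_left _ _) hcost)
    have he := abs_le.mp (le_trans (le_max_right _ _) hcost)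
    have hb1 := hb.1; have hb2 := hb.2
    have he1 := he.1; have he2 := he.2
    linarith
  have hM3 : k ≤ Multiset.countP (fun a => r - 2 * c ≤ a) (D'.map fun x => x.2 - x.1) := by
    have heq : Multiset.countP (fun a => r - 2 * c ≤ a)
        ((M.map Prod.snd).map fun x => x.2 - x.1) =
        Multiset.countP (fun q : (ℝ × ℝ) × (ℝ × ℝ) => r - 2 * c ≤ q.2.2 - q.2.1) M := by
      rw [Multiset.map_map, Multiset.countP_map, Multiset.countP_eq_card_filter]
      rfl
    have hle := Multiset.countP_le_of_le (fun a => r - 2 * c ≤ a)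
      (Multiset.map_le_map (f := fun x : ℝ × ℝ => x.2 - x.1) h2)
    omega
  have := persRank_ge hk hM3
  linarith

end Cost

lemma rank_stab (k : ℕ) (hk : 1 ≤ k) {D D' : Multiset (ℝ × ℝ)}
    (hD : IsPersistenceDiagram D) (hD' : IsPersistenceDiagram D')
    {M : Multiset ((ℝ × ℝ) × (ℝ × ℝ))}
    (h1 : M.map Prod.fst ≤ D) (h2 : M.map Prod.snd ≤ D') :
    |persistenceRank k D' - persistenceRank k D| ≤ 2 * matchingCost D D' M := by
  rw [abs_sub_le_iff]
  constructor
  · have e1 : (M.map Prod.swap).map Prod.fst = M.map Prod.snd := by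
      rw [Multiset.map_map]; rfl
    have e2 : (M.map Prod.swap).map Prod.snd = M.map Prod.fst := by
      rw [Multiset.map_map]; rfl
    have := rank_stab_one k hk hD' hD (M := M.map Prod.swap)
      (by rw [e1]; exact h2) (by rw [e2]; exact h1)
    rw [cost_swap] at this
    linarith
  · have := rank_stab_one k hk hD hD' h1 h2
    linarith

lemma exists_matching_of_lt {D D' : Multiset (ℝ × ℝ)} {δ : ℝ}
    (h : bottleneckDist D D' < δ) :
    ∃ M : Multiset ((ℝ × ℝ) × (ℝ × ℝ)),
      M.map Prod.fst ≤ D ∧ M.map Prod.snd ≤ D' ∧ matchingCost D D' M < δ := by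
  have hne : {c : ℝ | ∃ M : Multiset ((ℝ × ℝ) × (ℝ × ℝ)),
      M.map Prod.fst ≤ D ∧ M.map Prod.snd ≤ D' ∧ c = matchingCost D D' M}.Nonempty :=
    ⟨matchingCost D D' 0, 0, by simp, by simp, rfl⟩
  have hbdd : BddBelow {c : ℝ | ∃ M : Multiset ((ℝ × ℝ) × (ℝ × ℝ)),
      M.map Prod.fst ≤ D ∧ M.map Prod.snd ≤ D' ∧ c = matchingCost D D' M} := by
    refine ⟨0, fun c hc => ?_⟩
    obtain ⟨M, _, _, rfl⟩ := hc
    exact matchingCost_nonneg _ _ _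
  rw [bottleneckDist] at h
  obtain ⟨c, hc, hlt⟩ := (csInf_lt_iff hbdd hne).mp h
  obtain ⟨M, hM1, hM2, rfl⟩ := hc
  exact ⟨M, hM1, hM2, hlt⟩


/-- For a positive integer `m` and a persistence diagram `D` with at least `m`
points (counted with multiplicity), the hole detection score `s_m` is continuous at `D` with
respect to the bottleneck distance. -/
theorem holeDetectionScore_continuous (m : ℕ) (hm : 1 ≤ m)
    (D : Multiset (ℝ × ℝ)) (hD : IsPersistenceDiagram D) (hcard : m ≤ Multiset.card D) :
    ∀ ε : ℝ, 0 < ε → ∃ δ : ℝ, 0 < δ ∧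
      ∀ D' : Multiset (ℝ × ℝ), IsPersistenceDiagram D' →
        bottleneckDist D D' < δ →
        |holeDetectionScore m D' - holeDetectionScore m D| < ε := by
  intro ε hε
  set p := persistenceRank m D with hpdef
  set q := persistenceRank (m + 1) D with hqdef
  have hp : 0 < p := persRank_pos hm hD hcard
  have hf : ContinuousAt (fun z : ℝ × ℝ => (z.1 - z.2) / z.1) (p, q) :=
    (continuousAt_fst.sub continuousAt_snd).div continuousAt_fst (ne_of_gt hp)
  obtain ⟨δ₀, hδ₀, hcont⟩ := Metric.continuousAt_iff.mp hf ε hε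
  refine ⟨min δ₀ p / 2, by positivity, ?_⟩
  intro D' hD' hbd
  obtain ⟨M, h1, h2, hclt⟩ := exists_matching_of_lt hbd
  have hc0 := matchingCost_nonneg D D' M
  set p' := persistenceRank m D' with hp'def
  set q' := persistenceRank (m + 1) D' with hq'def
  have hsp : |p' - p| ≤ 2 * matchingCost D D' M := rank_stab m hm hD hD' h1 h2
  have hsq : |q' - q| ≤ 2 * matchingCost D D' M := rank_stab (m + 1) (by omega) hD hD' h1 h2
  have h2c : 2 * matchingCost D D' M < min δ₀ p := by linarith
  have hppd : |p' - p| < δ₀ := lt_of_le_of_lt hsp (lt_of_lt_of_le h2c (min_le_left _ _))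
  have hqqd : |q' - q| < δ₀ := lt_of_le_of_lt hsq (lt_of_lt_of_le h2c (min_le_left _ _))
  have hppp : |p' - p| < p := lt_of_le_of_lt hsp (lt_of_lt_of_le h2c (min_le_right _ _))
  have hp' : 0 < p' := by
    have := abs_lt.mp hppp
    linarith [this.1]
  have hdist : dist ((p', q') : ℝ × ℝ) (p, q) < δ₀ := by
    rw [Prod.dist_eq, Real.dist_eq, Real.dist_eq]
    exact max_lt hppd hqqd
  have hkey := hcont hdist
  simp only [Real.dist_eq] at hkey
  have hs' : holeDetectionScore m D' = (p' - q') / p' := by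
    rw [holeDetectionScore, if_pos hp']
  have hs : holeDetectionScore m D = (p - q) / p := by
    rw [holeDetectionScore, if_pos hp]
  rw [hs', hs]
  exact hkey
end

section
/- Let G be the unweighted path graph on three vertices {0, 1, 2}, i.e., the 3×3 adjacency matrix A with a_01 = a_10 = a_12 = a_21 = 1 and all other entries 0 (so d_0 = d_2 = 1, d_1 = 2). Then the corrected effective resistance between the two distinct endpoint vertices vanishes: d^eff_{02} = 0. -/
open Finset

/-- For the unweighted path graph on three vertices `0 – 1 – 2`, the corrected
effective resistance between the two endpoint vertices vanishes: `d^eff_{02} = 0`. -/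
theorem corrected_effective_resistance_path_graph_zero
    (A : Matrix (Fin 3) (Fin 3) ℝ)
    (hA : A = !![0, 1, 0; 1, 0, 1; 0, 1, 0])
    (deg : Fin 3 → ℝ) (hdeg : ∀ i, deg i = ∑ j, A i j)
    (vol : ℝ) (hvol : vol = ∑ i, deg i)
    (Lsym : Matrix (Fin 3) (Fin 3) ℝ)
    (hL : Lsym = 1 - (Matrix.diagonal fun i => (Real.sqrt (deg i))⁻¹) * A *
      (Matrix.diagonal fun i => (Real.sqrt (deg i))⁻¹))
    (u : Fin 3 → Fin 3 → ℝ) (μ : Fin 3 → ℝ)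
    (hortho : ∀ l m, ∑ i, u l i * u m i = if l = m then (1 : ℝ) else 0)
    (heig : ∀ l, Lsym.mulVec (u l) = μ l • u l)
    (hmono : Monotone μ) (hμ0 : μ 0 = 0)
    (hu0 : ∀ i, u 0 i = Real.sqrt (deg i) / Real.sqrt vol)
    (hμpos : ∀ l, l ≠ 0 → 0 < μ l)
    -- naive effective resistance
    (dnaive : Fin 3 → Fin 3 → ℝ)
    (hdnaive : ∀ i j, dnaive i j = ∑ l ∈ Finset.univ.filter (fun l : Fin 3 => l ≠ 0),
      (1 / μ l) * (u l i / Real.sqrt (deg i) - u l j / Real.sqrt (deg j)) ^ 2)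
    -- corrected effective resistance
    (deff : Fin 3 → Fin 3 → ℝ)
    (hdeff : ∀ i j, deff i j = dnaive i j - 1 / deg i - 1 / deg j
      + 2 * A i j / (deg i * deg j) - A i i / (deg i) ^ 2 - A j j / (deg j) ^ 2) :
    deff 0 2 = 0 := by
  have hd0 : deg 0 = 1 := by rw [hdeg]; simp [hA, Fin.sum_univ_three]
  have hd1 : deg 1 = 2 := by rw [hdeg]; simp [hA, Fin.sum_univ_three]; norm_num
  have hd2 : deg 2 = 1 := by rw [hdeg]; simp [hA, Fin.sum_univ_three]
  have hv : vol = 4 := by rw [hvol, Fin.sum_univ_three, hd0, hd1, hd2]; norm_num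
  set s : ℝ := Real.sqrt 2 with hs
  have s2pos : (0:ℝ) < s := Real.sqrt_pos.2 (by norm_num)
  have s2sq : s * s = 2 := Real.mul_self_sqrt (by norm_num)
  have sne : s ≠ 0 := ne_of_gt s2pos
  have h4 : Real.sqrt 4 = 2 := by
    rw [show (4:ℝ) = 2^2 by norm_num, Real.sqrt_sq (by norm_num)]
  -- u 0 values
  have hu00 : u 0 0 = 1/2 := by rw [hu0, hd0, hv, Real.sqrt_one, h4]
  have hu01 : u 0 1 = s/2 := by rw [hu0, hd1, hv, h4]
  have hu02 : u 0 2 = 1/2 := by rw [hu0, hd2, hv, Real.sqrt_one, h4]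
  -- explicit Lsym
  have hLmat : Lsym = !![1, -s⁻¹, 0; -s⁻¹, 1, -s⁻¹; 0, -s⁻¹, 1] := by
    rw [hL, hA]
    ext i j
    fin_cases i <;> fin_cases j <;>
      simp [Matrix.mul_apply, Matrix.one_apply, Matrix.diagonal, Fin.sum_univ_three,
        hd0, hd1, hd2, hs]
  -- eigen equations
  have eq0 : ∀ l, u l 0 - s⁻¹ * u l 1 = μ l * u l 0 := by
    intro l
    have := congrFun (heig l) 0
    simp [hLmat, Matrix.mulVec, dotProduct, Fin.sum_univ_three] at this
    linarith
  have eq2 : ∀ l, u l 2 - s⁻¹ * u l 1 = μ l * u l 2 := by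
    intro l
    have := congrFun (heig l) 2
    simp [hLmat, Matrix.mulVec, dotProduct, Fin.sum_univ_three] at this
    linarith
  have key : ∀ l, (1 - μ l) * (u l 0 - u l 2) = 0 := by
    intro l
    linear_combination (eq0 l) - (eq2 l)
  -- orthonormality facts
  have onorm : ∀ l, u l 0 ^ 2 + u l 1 ^ 2 + u l 2 ^ 2 = 1 := by
    intro l
    have := hortho l l
    simp [Fin.sum_univ_three] at this
    linear_combination this
  have operp : ∀ l : Fin 3, l ≠ 0 → u l 0 + s * u l 1 + u l 2 = 0 := by
    intro l hl
    have := hortho l 0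
    rw [if_neg hl] at this
    rw [Fin.sum_univ_three, hu00, hu01, hu02] at this
    linear_combination 2 * this
  have o12 : u 1 0 * u 2 0 + u 1 1 * u 2 1 + u 1 2 * u 2 2 = 0 := by
    have := hortho 1 2
    simpa [Fin.sum_univ_three] using this
  -- facts when μ l = 1
  have fact1 : ∀ l : Fin 3, l ≠ 0 → μ l = 1 →
      u l 1 = 0 ∧ u l 2 = -u l 0 ∧ u l 0 ^ 2 = 1/2 := by
    intro l hl hμ
    have e0 := eq0 l
    rw [hμ, one_mul] at e0
    have h1 : u l 1 = 0 := by
      have : s⁻¹ * u l 1 = 0 := by linarith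
      rcases mul_eq_zero.1 this with h | h
      · exact absurd h (inv_ne_zero sne)
      · exact h
    have hp := operp l hl
    rw [h1, mul_zero] at hp
    have h2 : u l 2 = -u l 0 := by linarith
    have hn := onorm l
    rw [h1, h2] at hn
    refine ⟨h1, h2, by linear_combination hn / 2⟩
  -- facts when μ l ≠ 1
  have fact2 : ∀ l : Fin 3, μ l ≠ 1 → u l 0 = u l 2 := by
    intro l hμ
    have := key l
    rcases mul_eq_zero.1 this with h | h
    · exact absurd (by linarith : μ l = 1) hμ
    · linarith
  -- not both μ 1 = 1 and μ 2 = 1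
  have notboth : ¬ (μ 1 = 1 ∧ μ 2 = 1) := by
    rintro ⟨h1, h2⟩
    obtain ⟨a1, b1, c1⟩ := fact1 1 (by decide) h1
    obtain ⟨a2, b2, c2⟩ := fact1 2 (by decide) h2
    rw [a1, a2, b1, b2] at o12
    have hx : u 1 0 * u 2 0 = 0 := by linear_combination o12 / 2
    have hq : (0:ℝ) = 1/4 := by
      calc (0:ℝ) = (u 1 0 * u 2 0) ^ 2 := by rw [hx]; ring
      _ = 1/4 := by linear_combination (u 2 0 ^ 2) * c1 + (1/2) * c2
    norm_num at hq
  -- not both ≠ 1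
  have notneither : ¬ (μ 1 ≠ 1 ∧ μ 2 ≠ 1) := by
    rintro ⟨h1, h2⟩
    have e1 := fact2 1 h1
    have e2 := fact2 2 h2
    have p1 := operp 1 (by decide)
    have p2 := operp 2 (by decide)
    have n1 := onorm 1
    have n2 := onorm 2
    rw [e1] at p1 n1
    rw [e2] at p2 n2
    -- u l 1 = -2/s * u l 2 ... use nlinarith
    -- from p1: 2 * u 1 2 + s * u 1 1 = 0
    have q1 : s * u 1 1 = -2 * u 1 2 := by linarith
    have q2 : s * u 2 1 = -2 * u 2 2 := by linarith
    -- n1 : 2 u12^2 + u11^2 = 1, with s^2 u11^2 = 4 u12^2 => 2 u11^2 = 4 u12^2 => u11^2 = 2 u12^2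
    have r1 : u 1 1 ^ 2 = 2 * u 1 2 ^ 2 := by
      linear_combination ((s * u 1 1 - 2 * u 1 2) / 2) * q1 - (u 1 1 ^ 2 / 2) * s2sq
    have r2 : u 2 1 ^ 2 = 2 * u 2 2 ^ 2 := by
      linear_combination ((s * u 2 1 - 2 * u 2 2) / 2) * q2 - (u 2 1 ^ 2 / 2) * s2sq
    have t1 : u 1 2 ^ 2 = 1/4 := by linear_combination n1 / 4 - r1 / 4
    have t2 : u 2 2 ^ 2 = 1/4 := by linear_combination n2 / 4 - r2 / 4
    rw [e1, e2] at o12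
    have w : u 1 1 * u 2 1 = 2 * (u 1 2 * u 2 2) := by
      linear_combination ((s * u 2 1) / 2) * q1 - u 1 2 * q2 - ((u 1 1 * u 2 1) / 2) * s2sq
    have hz : u 1 2 * u 2 2 = 0 := by linear_combination o12 / 4 - w / 4
    have hq : (0:ℝ) = 1/16 := by
      calc (0:ℝ) = (u 1 2 * u 2 2) ^ 2 := by rw [hz]; ring
      _ = 1/16 := by linear_combination (u 2 2 ^ 2) * t1 + (1/4) * t2
    norm_num at hq
  -- sum simplification
  have hfilter : (Finset.univ.filter (fun l : Fin 3 => l ≠ 0)) = {1, 2} := by decide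
  have hdn : dnaive 0 2 = (1 / μ 1) * (u 1 0 - u 1 2) ^ 2 + (1 / μ 2) * (u 2 0 - u 2 2) ^ 2 := by
    rw [hdnaive, hfilter, Finset.sum_insert (by decide), Finset.sum_singleton,
      hd0, hd2, Real.sqrt_one, div_one, div_one]
    ring
  have hdn2 : dnaive 0 2 = 2 := by
    by_cases h1 : μ 1 = 1
    · have h2 : μ 2 ≠ 1 := fun h => notboth ⟨h1, h⟩
      obtain ⟨a1, b1, c1⟩ := fact1 1 (by decide) h1
      have e2 := fact2 2 h2
      rw [hdn, h1, b1, e2]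
      linear_combination 4 * c1
    · have h2 : μ 2 = 1 := by
        by_contra h2; exact notneither ⟨h1, h2⟩
      obtain ⟨a2, b2, c2⟩ := fact1 2 (by decide) h2
      have e1 := fact2 1 h1
      rw [hdn, h2, b2, e1]
      linear_combination 4 * c2
  rw [hdeff, hdn2, hd0, hd2, hA]
  simp
  norm_num
end

section
/- Let G be the unweighted graph on five vertices {0, 1, 2, 3, 4} whose edges (all of weight 1) are {0,1}, {1,2}, {0,2}, {2,3}, {3,4} (a triangle on {0,1,2} with a path 2–3–4 attached). Then the corrected effective resistances satisfy d^eff_{02} = 1/6, d^eff_{24} = 2/3, and d^eff_{04} = 7/6; in particular d^eff_{04} > d^eff_{02} + d^eff_{24}, so the corrected effective resistance violates the triangle inequality. -/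
open Finset Matrix

/-- The matrix `C = D - A + d dᵀ/10` for our graph. -/
noncomputable def Cmat5 : Matrix (Fin 5) (Fin 5) ℝ :=
  !![12/5, -3/5, -2/5, 2/5, 1/5;
     -3/5, 12/5, -2/5, 2/5, 1/5;
     -2/5, -2/5, 39/10, -2/5, 3/10;
     2/5, 2/5, -2/5, 12/5, -4/5;
     1/5, 1/5, 3/10, -4/5, 11/10]

/-- The inverse of `Cmat5`. -/
noncomputable def Xmat5 : Matrix (Fin 5) (Fin 5) ℝ :=
  !![41/75, 16/75, 2/25, -11/50, -8/25;
     16/75, 41/75, 2/25, -11/50, -8/25;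
     2/25, 2/25, 7/25, -1/50, -3/25;
     -11/50, -11/50, -1/50, 17/25, 29/50;
     -8/25, -8/25, -3/25, 29/50, 37/25]

set_option maxHeartbeats 2000000 in
lemma Xmat5_mul_Cmat5 : Xmat5 * Cmat5 = 1 := by
  ext i k
  fin_cases i <;> fin_cases k <;>
    norm_num [Xmat5, Cmat5, Matrix.mul_apply, Fin.sum_univ_five, Matrix.one_apply,
      Matrix.vecHead, Matrix.vecTail, Matrix.cons_val_two, Matrix.cons_val_three,
      Matrix.cons_val_four] <;> rfl

/-- Auxiliary matrix `N i k = ∑_{l ≠ 0} (1/μ_l) (u_l i/√d_i)(u_l k/√d_k)`. -/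
noncomputable def NmatAux (u : Fin 5 → Fin 5 → ℝ) (μ deg : Fin 5 → ℝ) : Matrix (Fin 5) (Fin 5) ℝ :=
  Matrix.of fun i k => ∑ l ∈ Finset.univ.filter (fun l : Fin 5 => l ≠ 0),
    (1 / μ l) * (u l i / Real.sqrt (deg i)) * (u l k / Real.sqrt (deg k))

set_option maxHeartbeats 1600000 in
/-- For the unweighted graph on five vertices consisting of a triangle
`{0,1,2}` with a path `2 – 3 – 4` attached, the corrected effective resistances satisfy
`d^eff_{02} = 1/6`, `d^eff_{24} = 2/3`, `d^eff_{04} = 7/6`; in particular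
`d^eff_{04} > d^eff_{02} + d^eff_{24}`, violating the triangle inequality. -/
theorem corrected_effective_resistance_triangle_inequality_violation
    (A : Matrix (Fin 5) (Fin 5) ℝ)
    (hA : A = !![0, 1, 1, 0, 0;
                 1, 0, 1, 0, 0;
                 1, 1, 0, 1, 0;
                 0, 0, 1, 0, 1;
                 0, 0, 0, 1, 0])
    (deg : Fin 5 → ℝ) (hdeg : ∀ i, deg i = ∑ j, A i j)
    (vol : ℝ) (hvol : vol = ∑ i, deg i)
    (Lsym : Matrix (Fin 5) (Fin 5) ℝ)
    (hL : Lsym = 1 - (Matrix.diagonal fun i => (Real.sqrt (deg i))⁻¹) * A *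
      (Matrix.diagonal fun i => (Real.sqrt (deg i))⁻¹))
    (u : Fin 5 → Fin 5 → ℝ) (μ : Fin 5 → ℝ)
    (hortho : ∀ l m, ∑ i, u l i * u m i = if l = m then (1 : ℝ) else 0)
    (heig : ∀ l, Lsym.mulVec (u l) = μ l • u l)
    (hmono : Monotone μ) (hμ0 : μ 0 = 0)
    (hu0 : ∀ i, u 0 i = Real.sqrt (deg i) / Real.sqrt vol)
    (hμpos : ∀ l, l ≠ 0 → 0 < μ l)
    -- naive effective resistance
    (dnaive : Fin 5 → Fin 5 → ℝ)
    (hdnaive : ∀ i j, dnaive i j = ∑ l ∈ Finset.univ.filter (fun l : Fin 5 => l ≠ 0),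
      (1 / μ l) * (u l i / Real.sqrt (deg i) - u l j / Real.sqrt (deg j)) ^ 2)
    -- corrected effective resistance
    (deff : Fin 5 → Fin 5 → ℝ)
    (hdeff : ∀ i j, deff i j = dnaive i j - 1 / deg i - 1 / deg j
      + 2 * A i j / (deg i * deg j) - A i i / (deg i) ^ 2 - A j j / (deg j) ^ 2) :
    deff 0 2 = 1 / 6 ∧ deff 2 4 = 2 / 3 ∧ deff 0 4 = 7 / 6 ∧
      deff 0 2 + deff 2 4 < deff 0 4 := by
  -- degrees and volume
  have hdeg' : deg = ![2, 2, 3, 2, 1] := by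
    funext i; fin_cases i <;> rw [hdeg] <;> norm_num [hA, Fin.sum_univ_five, Matrix.cons_val_two, Matrix.cons_val_three, Matrix.cons_val_four]
  have hdpos : ∀ i, 0 < deg i := by
    intro i; fin_cases i <;> norm_num [hdeg']
  have hdnn : ∀ i, (0 : ℝ) ≤ deg i := fun i => (hdpos i).le
  have hsdpos : ∀ i, 0 < Real.sqrt (deg i) := fun i => Real.sqrt_pos.mpr (hdpos i)
  have hsd : ∀ i, Real.sqrt (deg i) ≠ 0 := fun i => (hsdpos i).ne'
  have hvol10 : vol = 10 := by
    rw [hvol, Fin.sum_univ_five, hdeg']; norm_num [Matrix.cons_val_two, Matrix.cons_val_three, Matrix.cons_val_four]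
  have h10 : Real.sqrt 10 ≠ 0 := (Real.sqrt_pos.mpr (by norm_num)).ne'
  -- (1) for l ≠ 0, ∑ j √(d_j) u_l j = 0
  have hzero : ∀ l : Fin 5, l ≠ 0 → ∑ j, Real.sqrt (deg j) * u l j = 0 := by
    intro l hl
    have h := hortho 0 l
    rw [if_neg (fun h' => hl h'.symm)] at h
    have : ∑ j, Real.sqrt (deg j) * u l j = Real.sqrt 10 * ∑ i, u 0 i * u l i := by
      rw [Finset.mul_sum]
      refine Finset.sum_congr rfl fun j _ => ?_
      rw [hu0 j, hvol10]
      field_simp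
    rw [this, h, mul_zero]
  -- (2) eigen-relation in unnormalized coordinates
  have heig' : ∀ l i, ∑ j, A i j * (u l j / Real.sqrt (deg j))
      = (1 - μ l) * (Real.sqrt (deg i) * u l i) := by
    intro l i
    have h := congrFun (heig l) i
    rw [hL] at h
    simp only [Matrix.sub_mulVec, Matrix.one_mulVec, Pi.sub_apply, Pi.smul_apply,
      smul_eq_mul] at h
    have hm : (((Matrix.diagonal fun i => (Real.sqrt (deg i))⁻¹) * A *
        Matrix.diagonal fun i => (Real.sqrt (deg i))⁻¹).mulVec (u l)) i
        = (Real.sqrt (deg i))⁻¹ * ∑ j, A i j * (u l j / Real.sqrt (deg j)) := by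
      rw [Matrix.mulVec, dotProduct, Finset.mul_sum]
      refine Finset.sum_congr rfl fun j _ => ?_
      rw [Matrix.mul_diagonal, Matrix.diagonal_mul]
      field_simp
    rw [hm] at h
    have h2 : (Real.sqrt (deg i))⁻¹ * ∑ j, A i j * (u l j / Real.sqrt (deg j))
        = (1 - μ l) * u l i := by linarith
    have h3 := congrArg (fun x => Real.sqrt (deg i) * x) h2
    rw [← mul_assoc, mul_inv_cancel₀ (hsd i), one_mul] at h3
    rw [h3]; ring
  -- (3) columns of U are orthonormal
  have hcol : ∀ i k, ∑ l, u l i * u l k = if i = k then (1 : ℝ) else 0 := by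
    have hU : (Matrix.of u) * (Matrix.of u)ᵀ = 1 := by
      ext l m
      rw [Matrix.mul_apply, Matrix.one_apply]
      simpa using hortho l m
    have hU' : (Matrix.of u)ᵀ * (Matrix.of u) = 1 := mul_eq_one_comm.mp hU
    intro i k
    have := congrFun (congrFun hU' i) k
    simpa [Matrix.mul_apply, Matrix.one_apply] using this
  have hCstruct : ∀ i j, Cmat5 i j = (if i = j then deg i else 0) - A i j + deg i * deg j / 10 := by
    intro i j
    fin_cases i <;> fin_cases j <;>
      norm_num [Cmat5, hA, hdeg', Matrix.vecHead, Matrix.vecTail, Fin.ext_iff]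
  have hrow : ∀ i, ∑ j, Cmat5 i j = deg i := by
    intro i
    fin_cases i <;> norm_num [Cmat5, hdeg', Fin.sum_univ_five, Matrix.vecHead, Matrix.vecTail,
      Matrix.cons_val_two, Matrix.cons_val_three, Matrix.cons_val_four]
  -- (4) key identity: C acts on the unnormalized eigenvectors
  have hCu : ∀ l : Fin 5, l ≠ 0 → ∀ i,
      ∑ j, Cmat5 i j * (u l j / Real.sqrt (deg j)) = μ l * (Real.sqrt (deg i) * u l i) := by
    intro l hl i
    have e2' : ∑ j, deg j * (u l j / Real.sqrt (deg j)) = 0 := by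
      rw [← hzero l hl]
      refine Finset.sum_congr rfl fun j _ => ?_
      rw [show deg j * (u l j / Real.sqrt (deg j))
          = deg j / Real.sqrt (deg j) * u l j from by ring, Real.div_sqrt]
    have split : ∑ j, Cmat5 i j * (u l j / Real.sqrt (deg j))
        = deg i * (u l i / Real.sqrt (deg i))
          - (∑ j, A i j * (u l j / Real.sqrt (deg j)))
          + deg i / 10 * ∑ j, deg j * (u l j / Real.sqrt (deg j)) := by
      have key : ∀ j : Fin 5, Cmat5 i j * (u l j / Real.sqrt (deg j))
          = (if i = j then deg i * (u l i / Real.sqrt (deg i)) else 0)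
            - A i j * (u l j / Real.sqrt (deg j))
            + deg i / 10 * (deg j * (u l j / Real.sqrt (deg j))) := by
        intro j
        rw [hCstruct i j]
        by_cases hij : i = j
        · subst hij; simp; ring
        · simp [hij]; ring
      calc ∑ j, Cmat5 i j * (u l j / Real.sqrt (deg j))
          = ∑ j, ((if i = j then deg i * (u l i / Real.sqrt (deg i)) else 0)
              - A i j * (u l j / Real.sqrt (deg j))
              + deg i / 10 * (deg j * (u l j / Real.sqrt (deg j)))) :=
            Finset.sum_congr rfl fun j _ => key j
        _ = (∑ j, (if i = j then deg i * (u l i / Real.sqrt (deg i)) else 0))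
              - (∑ j, A i j * (u l j / Real.sqrt (deg j)))
              + ∑ j, deg i / 10 * (deg j * (u l j / Real.sqrt (deg j))) := by
            rw [Finset.sum_add_distrib, Finset.sum_sub_distrib]
        _ = deg i * (u l i / Real.sqrt (deg i))
              - (∑ j, A i j * (u l j / Real.sqrt (deg j)))
              + deg i / 10 * ∑ j, deg j * (u l j / Real.sqrt (deg j)) := by
            rw [Finset.sum_ite_eq, ← Finset.mul_sum]
            simp
    rw [split, heig' l i, e2', mul_zero, add_zero,
      show deg i * (u l i / Real.sqrt (deg i))
        = deg i / Real.sqrt (deg i) * u l i from by ring, Real.div_sqrt]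
    ring
  -- (5) partial completeness: sum over l ≠ 0 of u_l i u_l k
  have hNsum : ∀ i k, ∑ l ∈ Finset.univ.filter (fun l : Fin 5 => l ≠ 0), u l i * u l k
      = (if i = k then (1 : ℝ) else 0) - Real.sqrt (deg i) * Real.sqrt (deg k) / 10 := by
    intro i k
    rw [Finset.filter_ne', Finset.sum_erase_eq_sub (Finset.mem_univ 0), hcol i k,
      hu0 i, hu0 k, hvol10]
    rw [div_mul_div_comm, Real.mul_self_sqrt (by norm_num : (0:ℝ) ≤ 10)]
  -- (6) C * N has explicit entries
  have hCN : ∀ i k, ∑ j, Cmat5 i j * (NmatAux u μ deg) j k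
      = (if i = k then (1 : ℝ) else 0) - deg i / 10 := by
    intro i k
    have swap : ∑ j, Cmat5 i j * (NmatAux u μ deg) j k
        = ∑ l ∈ Finset.univ.filter (fun l : Fin 5 => l ≠ 0),
            (1 / μ l) * (u l k / Real.sqrt (deg k)) *
              ∑ j, Cmat5 i j * (u l j / Real.sqrt (deg j)) := by
      simp only [NmatAux, Matrix.of_apply, Finset.mul_sum]
      rw [Finset.sum_comm]
      exact Finset.sum_congr rfl fun l _ => Finset.sum_congr rfl fun j _ => by ring
    rw [swap]
    have step : ∀ l ∈ Finset.univ.filter (fun l : Fin 5 => l ≠ 0),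
        (1 / μ l) * (u l k / Real.sqrt (deg k)) *
          ∑ j, Cmat5 i j * (u l j / Real.sqrt (deg j))
        = Real.sqrt (deg i) / Real.sqrt (deg k) * (u l i * u l k) := by
      intro l hl
      have hl0 : l ≠ 0 := by simpa using hl
      rw [hCu l hl0 i]
      have hμ : μ l ≠ 0 := (hμpos l hl0).ne'
      have hk : Real.sqrt (deg k) ≠ 0 := hsd k
      have hi : Real.sqrt (deg i) ≠ 0 := hsd i
      field_simp
    rw [Finset.sum_congr rfl step, ← Finset.mul_sum, hNsum i k, mul_sub]
    have h1 : Real.sqrt (deg i) / Real.sqrt (deg k) *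
        (Real.sqrt (deg i) * Real.sqrt (deg k) / 10) = deg i / 10 := by
      rw [show Real.sqrt (deg i) / Real.sqrt (deg k) *
            (Real.sqrt (deg i) * Real.sqrt (deg k) / 10)
          = Real.sqrt (deg i) * Real.sqrt (deg i) *
            (Real.sqrt (deg k) / Real.sqrt (deg k)) / 10 from by ring,
        div_self (hsd k), Real.mul_self_sqrt (hdnn i), mul_one]
    rw [h1]
    congr 1
    by_cases hik : i = k
    · subst hik; simp [div_self (hsd i)]
    · simp [hik]
  -- (7) identify N + J/10 with the explicit inverse X
  have hCP : Cmat5 * Matrix.of (fun i k => (NmatAux u μ deg) i k + 1 / 10) = 1 := by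
    ext i k
    rw [Matrix.mul_apply, Matrix.one_apply]
    calc ∑ j, Cmat5 i j * (Matrix.of (fun i k => (NmatAux u μ deg) i k + 1 / 10)) j k
        = ∑ j, (Cmat5 i j * (NmatAux u μ deg) j k + Cmat5 i j * (1 / 10)) := by
          refine Finset.sum_congr rfl fun j _ => ?_
          simp only [Matrix.of_apply]; ring
      _ = (∑ j, Cmat5 i j * (NmatAux u μ deg) j k) + (∑ j, Cmat5 i j) * (1 / 10) := by
          rw [Finset.sum_add_distrib, Finset.sum_mul]
      _ = (if i = k then (1 : ℝ) else 0) := by rw [hCN, hrow]; ring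
  have hXC : Xmat5 * Cmat5 = 1 := Xmat5_mul_Cmat5
  have hPX : Matrix.of (fun i k => (NmatAux u μ deg) i k + 1 / 10) = Xmat5 := by
    calc Matrix.of (fun i k => (NmatAux u μ deg) i k + 1 / 10)
        = (Xmat5 * Cmat5) * Matrix.of (fun i k => (NmatAux u μ deg) i k + 1 / 10) := by
          rw [hXC, one_mul]
      _ = Xmat5 * (Cmat5 * Matrix.of (fun i k => (NmatAux u μ deg) i k + 1 / 10)) := by
          rw [Matrix.mul_assoc]
      _ = Xmat5 := by rw [hCP, mul_one]
  have hNval : ∀ i k, (NmatAux u μ deg) i k = Xmat5 i k - 1 / 10 := by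
    intro i k
    have := congrFun (congrFun hPX i) k
    simp only [Matrix.of_apply] at this
    linarith
  -- (8) dnaive in terms of N
  have hdn : ∀ i j, dnaive i j = (NmatAux u μ deg) i i + (NmatAux u μ deg) j j
      - 2 * (NmatAux u μ deg) i j := by
    intro i j
    rw [hdnaive]
    simp only [NmatAux, Matrix.of_apply]
    rw [Finset.mul_sum, ← Finset.sum_add_distrib, ← Finset.sum_sub_distrib]
    exact Finset.sum_congr rfl fun l _ => by ring
  -- (9) numeric values
  have d02 : dnaive 0 2 = 2 / 3 := by
    rw [hdn, hNval, hNval, hNval]; norm_num [Xmat5, Matrix.vecHead, Matrix.vecTail, Matrix.cons_val_two, Matrix.cons_val_three, Matrix.cons_val_four]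
  have d24 : dnaive 2 4 = 2 := by
    rw [hdn, hNval, hNval, hNval]; norm_num [Xmat5, Matrix.vecHead, Matrix.vecTail, Matrix.cons_val_two, Matrix.cons_val_three, Matrix.cons_val_four]
  have d04 : dnaive 0 4 = 8 / 3 := by
    rw [hdn, hNval, hNval, hNval]; norm_num [Xmat5, Matrix.vecHead, Matrix.vecTail, Matrix.cons_val_two, Matrix.cons_val_three, Matrix.cons_val_four]
  have e02 : deff 0 2 = 1 / 6 := by
    rw [hdeff, d02]; simp [hA, hdeg']; norm_num
  have e24 : deff 2 4 = 2 / 3 := by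
    rw [hdeff, d24]; simp [hA, hdeg']; norm_num
  have e04 : deff 0 4 = 7 / 6 := by
    rw [hdeff, d04]; simp [hA, hdeg']; norm_num
  exact ⟨e02, e24, e04, by rw [e02, e24, e04]; norm_num⟩
end
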